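/- arXiv:1212.5920 — 5 statements merged into one kernel-verified Lean document; each statement's English description precedes it below -/
import Mathlib

section
/- Let k ≥ 1 be an integer, let λ be a partition all of whose parts are at most k, and let μ be a partition all of whose parts are at most 2k, with conjugates λ' and μ'. Then Σ_{p=1}^{ℓ(μ)} Σ_{q=1}^{ℓ(λ)} min{μ_p, 2·λ_q} = Σ_{s=1}^{k} λ'_s · ( μ'_{2s−1} + μ'_{2s} ). -/
lemma pair_sum_aux (k : ℕ) (F : ℕ → ℕ) :
    ∑ t ∈ Finset.Icc 1 (2*k), F t = ∑ s ∈ Finset.Icc 1 k, (F (2*s-1) + F (2*s)) := by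
  induction k with
  | zero => simp
  | succ n ih =>
    have h2 : 2*(n+1) = 2*n + 1 + 1 := by ring
    rw [Finset.sum_Icc_succ_top (by omega : 1 ≤ n+1), h2,
      Finset.sum_Icc_succ_top (by omega : (1:ℕ) ≤ 2*n+1+1),
      Finset.sum_Icc_succ_top (by omega : (1:ℕ) ≤ 2*n+1), ih]
    simp only [Nat.add_sub_cancel]
    ring

/-- Let `k ≥ 1`, let `λ` be a partition with all parts `≤ k` and `μ`
a partition with all parts `≤ 2k` (partitions given as weakly decreasing functions
with positive parts), with conjugates `λ'`, `μ'` (where `λ'_s = #{q : λ_q ≥ s}`).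
Then `Σ_p Σ_q min (μ_p) (2 λ_q) = Σ_{s=1}^{k} λ'_s (μ'_{2s-1} + μ'_{2s})`. -/
theorem sum_min_charges_eq_sum_conjugate_products
    (k : ℕ) (hk : 1 ≤ k) (ℓ₁ ℓ₂ : ℕ) (lam : Fin ℓ₁ → ℕ) (mu : Fin ℓ₂ → ℕ)
    (hlam_pos : ∀ q, 1 ≤ lam q)
    (hlam_dec : ∀ q q' : Fin ℓ₁, q ≤ q' → lam q' ≤ lam q)
    (hlam_le : ∀ q, lam q ≤ k)
    (hmu_pos : ∀ p, 1 ≤ mu p)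
    (hmu_dec : ∀ p p' : Fin ℓ₂, p ≤ p' → mu p' ≤ mu p)
    (hmu_le : ∀ p, mu p ≤ 2 * k) :
    ∑ p : Fin ℓ₂, ∑ q : Fin ℓ₁, min (mu p) (2 * lam q)
      = ∑ s ∈ Finset.Icc 1 k,
          (Finset.univ.filter (fun q : Fin ℓ₁ => s ≤ lam q)).card *
            ((Finset.univ.filter (fun p : Fin ℓ₂ => 2 * s - 1 ≤ mu p)).card +
              (Finset.univ.filter (fun p : Fin ℓ₂ => 2 * s ≤ mu p)).card) := by
  have key : ∀ (p : Fin ℓ₂) (q : Fin ℓ₁), min (mu p) (2 * lam q)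
      = ∑ t ∈ Finset.Icc 1 (2*k),
          ((if t ≤ mu p then 1 else 0) * (if t ≤ 2 * lam q then 1 else 0)) := by
    intro p q
    have hfil : (Finset.Icc 1 (2*k)).filter (fun t => t ≤ mu p ∧ t ≤ 2*lam q)
        = Finset.Icc 1 (min (mu p) (2*lam q)) := by
      ext t
      have := hmu_le p
      have := hlam_le q
      simp only [Finset.mem_filter, Finset.mem_Icc]
      omega
    calc min (mu p) (2 * lam q)
        = (Finset.Icc 1 (min (mu p) (2*lam q))).card := by
          rw [Nat.card_Icc]; omega
      _ = ∑ t ∈ Finset.Icc 1 (2*k),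
            (if t ≤ mu p ∧ t ≤ 2*lam q then 1 else 0) := by
          rw [← hfil, Finset.card_filter]
      _ = _ := by
          refine Finset.sum_congr rfl fun t _ => ?_
          by_cases h1 : t ≤ mu p <;> by_cases h2 : t ≤ 2*lam q <;> simp [h1, h2]
  calc ∑ p : Fin ℓ₂, ∑ q : Fin ℓ₁, min (mu p) (2 * lam q)
      = ∑ t ∈ Finset.Icc 1 (2*k),
          ((∑ p : Fin ℓ₂, if t ≤ mu p then 1 else 0) *
           (∑ q : Fin ℓ₁, if t ≤ 2 * lam q then 1 else 0)) := by
        simp_rw [key]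
        calc ∑ p : Fin ℓ₂, ∑ q : Fin ℓ₁, ∑ t ∈ Finset.Icc 1 (2*k),
              ((if t ≤ mu p then (1:ℕ) else 0) * (if t ≤ 2 * lam q then 1 else 0))
            = ∑ p : Fin ℓ₂, ∑ t ∈ Finset.Icc 1 (2*k), ∑ q : Fin ℓ₁,
              ((if t ≤ mu p then (1:ℕ) else 0) * (if t ≤ 2 * lam q then 1 else 0)) :=
              Finset.sum_congr rfl fun p _ => Finset.sum_comm
          _ = ∑ t ∈ Finset.Icc 1 (2*k), ∑ p : Fin ℓ₂, ∑ q : Fin ℓ₁,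
              ((if t ≤ mu p then (1:ℕ) else 0) * (if t ≤ 2 * lam q then 1 else 0)) :=
              Finset.sum_comm
          _ = _ := Finset.sum_congr rfl fun t _ => (Finset.sum_mul_sum _ _ _ _).symm
    _ = ∑ t ∈ Finset.Icc 1 (2*k),
          ((Finset.univ.filter (fun p : Fin ℓ₂ => t ≤ mu p)).card *
           (Finset.univ.filter (fun q : Fin ℓ₁ => t ≤ 2 * lam q)).card) := by
        refine Finset.sum_congr rfl fun t _ => ?_
        rw [Finset.card_filter, Finset.card_filter]
    _ = _ := by
        rw [pair_sum_aux]
        refine Finset.sum_congr rfl fun s hs => ?_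
        rw [Finset.mem_Icc] at hs
        have e1 : Finset.univ.filter (fun q : Fin ℓ₁ => 2*s-1 ≤ 2 * lam q)
            = Finset.univ.filter (fun q : Fin ℓ₁ => s ≤ lam q) := by
          ext q
          simp only [Finset.mem_filter, Finset.mem_univ, true_and]
          omega
        have e2 : Finset.univ.filter (fun q : Fin ℓ₁ => 2*s ≤ 2 * lam q)
            = Finset.univ.filter (fun q : Fin ℓ₁ => s ≤ lam q) := by
          ext q
          simp only [Finset.mem_filter, Finset.mem_univ, true_and]
          omega
        rw [e1, e2]
        ring
end

section
/- Fix an integer k ≥ 1 and nonnegative integers r⁽¹⁾ ≥ r⁽²⁾ ≥ … ≥ r⁽ᵏ⁾ ≥ 0, with the convention r⁽ᵏ⁺¹⁾ = 0, and define n_p = #{s ∈ {1,…,k} : r⁽ˢ⁾ ≥ p} for 1 ≤ p ≤ r⁽¹⁾ (so n₁ ≥ n₂ ≥ … ≥ n_{r⁽¹⁾} ≥ 1). Then for every integer N, the number of integer sequences (m_p)_{p=1}^{r⁽¹⁾} satisfying (i) m_p ≤ −n_p − 2·Σ_{p'=1}^{p−1} min{n_p, n_{p'}} for all 1 ≤ p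 ≤ r⁽¹⁾, (ii) m_{p+1} ≤ m_p − 2·n_p whenever 1 ≤ p ≤ r⁽¹⁾−1 and n_{p+1} = n_p, and (iii) −Σ_{p=1}^{r⁽¹⁾} m_p = N, is equal to the number of k-tuples of partitions (σ⁽¹⁾, …, σ⁽ᵏ⁾) with ℓ(σ⁽ˢ⁾) ≤ r⁽ˢ⁾ − r⁽ˢ⁺¹⁾ for each 1 ≤ s ≤ k and Σ_{s=1}^{k} |σ⁽ˢ⁾| = N − Σ_{s=1}^{k} (r⁽ˢ⁾)². -/
/-- A partition: a finite weakly decreasing list of positive integers. -/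
structure Ptn where
  parts : List ℕ
  sorted : parts.Pairwise (· ≥ ·)
  pos : ∀ x ∈ parts, 0 < x

/-- The length `ℓ(λ)` of a partition. -/
def Ptn.length (lam : Ptn) : ℕ := lam.parts.length

/-- The size `|λ|` of a partition. -/
def Ptn.size (lam : Ptn) : ℕ := lam.parts.sum


-- L1
lemma aux_sum_getD (l : List ℕ) : ∀ (L : ℕ), l.length ≤ L →
    ∑ j ∈ Finset.range L, l.getD j 0 = l.sum := by
  induction l with
  | nil => intro L _; simp
  | cons a tl ih =>
    intro L hL
    cases L with
    | zero => simp at hL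
    | succ L' =>
      rw [Finset.sum_range_succ']
      simp only [List.getD_cons_succ, List.getD_cons_zero, List.sum_cons]
      rw [ih L' (by simpa using hL)]
      ring

-- L2
lemma aux_getD_filter (l : List ℕ) (h : l.Pairwise (· ≥ ·)) (i : ℕ) :
    (l.filter (fun x => 0 < x)).getD i 0 = l.getD i 0 := by
  induction l generalizing i with
  | nil => simp
  | cons a tl ih =>
    rw [List.pairwise_cons] at h
    by_cases ha : 0 < a
    · rw [List.filter_cons_of_pos (by simpa using ha)]
      cases i with
      | zero => simp
      | succ i' => simpa using ih h.2 i'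
    · have ha0 : a = 0 := by omega
      have hall : ∀ x ∈ tl, x = 0 := fun x hx => by
        have := h.1 x hx; omega
      rw [List.filter_cons_of_neg (by simpa using ha)]
      have : List.filter (fun x => 0 < x) tl = [] := by
        rw [List.filter_eq_nil_iff]
        intro x hx; simp [hall x hx]
      rw [this]
      cases i with
      | zero => simp [ha0]
      | succ i' =>
        simp only [List.getD_nil, List.getD_cons_succ]
        rcases Nat.lt_or_ge i' tl.length with hi | hi
        · rw [List.getD_eq_getElem _ _ hi]
          exact (hall _ (List.getElem_mem hi)).symm
        · rw [List.getD_eq_default _ _ hi]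

-- L3
lemma aux_getD_anti (l : List ℕ) (h : l.Pairwise (· ≥ ·)) {i j : ℕ} (hij : i ≤ j) :
    l.getD j 0 ≤ l.getD i 0 := by
  rcases Nat.lt_or_ge j l.length with hj | hj
  · rw [List.getD_eq_getElem _ _ hj, List.getD_eq_getElem _ _ (lt_of_le_of_lt hij hj)]
    rcases eq_or_lt_of_le hij with rfl | hlt
    · exact le_refl _
    · exact List.Pairwise.rel_get_of_lt h (by simpa using hlt)
  · rw [List.getD_eq_default _ _ hj]; exact Nat.zero_le _

-- L4
lemma aux_map_getD (l : List ℕ) (L : ℕ) (hL : l.length ≤ L) :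
    (List.range L).map (fun j => l.getD j 0) = l ++ List.replicate (L - l.length) 0 := by
  apply List.ext_getElem
  · simp; omega
  · intro i h1 h2
    simp only [List.getElem_map, List.getElem_range]
    rcases Nat.lt_or_ge i l.length with hi | hi
    · rw [List.getD_eq_getElem _ _ hi, List.getElem_append_left hi]
    · rw [List.getD_eq_default _ _ hi, List.getElem_append_right hi]
      simp

lemma aux_filter_getD (l : List ℕ) (hpos : ∀ x ∈ l, 0 < x) (L : ℕ) (hL : l.length ≤ L) :
    ((List.range L).map (fun j => l.getD j 0)).filter (fun x => 0 < x) = l := by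
  rw [aux_map_getD l L hL, List.filter_append]
  have h1 : l.filter (fun x => 0 < x) = l := by
    rw [List.filter_eq_self]; intro a ha; simpa using hpos a ha
  have h2 : (List.replicate (L - l.length) (0:ℕ)).filter (fun x => 0 < x) = [] := by
    rw [List.filter_eq_nil_iff]; intro a ha; simp [List.eq_of_mem_replicate ha]
  rw [h1, h2, List.append_nil]

-- L5
lemma aux_sum_filter_pos (l : List ℕ) : (l.filter (fun x => 0 < x)).sum = l.sum := by
  induction l with
  | nil => simp
  | cons a tl ih =>
    by_cases ha : 0 < a
    · rw [List.filter_cons_of_pos (by simpa using ha)]; simp [ih]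
    · rw [List.filter_cons_of_neg (by simpa using ha)]; simp [ih]; omega

-- odd sum
lemma aux_sum_odd (m : ℕ) : ∑ p ∈ Finset.range m, (2*p+1) = m^2 := by
  induction m with
  | zero => simp
  | succ m ih => rw [Finset.sum_range_succ, ih]; ring

section
variable (k : ℕ) (r : ℕ → ℕ) (n : ℕ → ℕ)
variable (hk : 1 ≤ k)
variable (hr_anti : ∀ i j, i ≤ j → r j ≤ r i) (hr_zero : ∀ s, k ≤ s → r s = 0)
variable (hn : ∀ p, n p = ((Finset.range k).filter (fun s => p + 1 ≤ r s)).card)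

include hn in
lemma aux_n_le_k (p : ℕ) : n p ≤ k := by
  rw [hn]
  calc ((Finset.range k).filter (fun s => p + 1 ≤ r s)).card
      ≤ (Finset.range k).card := Finset.card_le_card (Finset.filter_subset _ _)
    _ = k := Finset.card_range k

include hn in
lemma aux_n_anti {p q : ℕ} (h : p ≤ q) : n q ≤ n p := by
  rw [hn, hn]
  apply Finset.card_le_card
  intro s hs
  simp only [Finset.mem_filter, Finset.mem_range] at *
  omega

include hk hn in
lemma aux_n_pos {p : ℕ} (hp : p < r 0) : 1 ≤ n p := by
  rw [hn]
  have h0 : 0 ∈ (Finset.range k).filter (fun s => p + 1 ≤ r s) := by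
    simp only [Finset.mem_filter, Finset.mem_range]
    omega
  exact Finset.card_pos.mpr ⟨0, h0⟩

include hr_anti hr_zero hn in
lemma aux_r_n_le {p : ℕ} : r (n p) ≤ p := by
  by_contra h
  push_neg at h
  have hnk : n p < k := by
    rcases Nat.lt_or_ge (n p) k with h' | h'
    · exact h'
    · exfalso; rw [hr_zero _ h'] at h; omega
  have hsub : Finset.range (n p + 1) ⊆ (Finset.range k).filter (fun s => p + 1 ≤ r s) := by
    intro s hs
    simp only [Finset.mem_range] at hs
    simp only [Finset.mem_filter, Finset.mem_range]
    constructor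
    · omega
    · have := hr_anti s (n p) (by omega)
      omega
  have := Finset.card_le_card hsub
  rw [Finset.card_range, ← hn] at this
  omega

include hr_anti hn in
lemma aux_lt_r_n {p : ℕ} (h1 : 1 ≤ n p) : p < r (n p - 1) := by
  by_contra h
  push_neg at h
  have hsub : (Finset.range k).filter (fun s => p + 1 ≤ r s) ⊆ Finset.range (n p - 1) := by
    intro s hs
    simp only [Finset.mem_filter, Finset.mem_range] at hs
    simp only [Finset.mem_range]
    by_contra hs'
    push_neg at hs'
    have := hr_anti (n p - 1) s hs'
    omega
  have := Finset.card_le_card hsub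
  rw [Finset.card_range, ← hn] at this
  omega

include hr_anti hr_zero hn in
lemma aux_n_eq {s p : ℕ} (hs : s < k) (h1 : r (s+1) ≤ p) (h2 : p < r s) : n p = s + 1 := by
  have hZ : 1 ≤ n p := by
    rw [hn]
    refine Finset.card_pos.mpr ⟨s, ?_⟩
    simp only [Finset.mem_filter, Finset.mem_range]
    omega
  have hA : r (n p) ≤ p := aux_r_n_le k r n hr_anti hr_zero hn
  have hB : p < r (n p - 1) := aux_lt_r_n k r n hr_anti hn hZ
  -- p < r s and r (n p) ≤ p ⇒ s < n p
  have h3 : s < n p := by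
    by_contra h
    push_neg at h
    have := hr_anti (n p) s h
    omega
  have h4 : n p ≤ s + 1 := by
    by_contra h
    push_neg at h
    have := hr_anti (s+1) (n p - 1) (by omega)
    omega
  omega

end


lemma aux_reflect {M : Type*} [AddCommMonoid M] (f : ℕ → M) {a b : ℕ} (hab : a ≤ b) :
    ∑ j ∈ Finset.range (b - a), f (b - 1 - j) = ∑ p ∈ Finset.Ico a b, f p := by
  rw [Finset.sum_Ico_eq_sum_range]
  rw [← Finset.sum_range_reflect (fun j => f (a + j)) (b - a)]
  apply Finset.sum_congr rfl
  intro j hj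
  simp only [Finset.mem_range] at hj
  congr 1
  omega

section
variable (k : ℕ) (r : ℕ → ℕ) (n : ℕ → ℕ)
variable (hr_anti : ∀ i j, i ≤ j → r j ≤ r i) (hr_zero : ∀ s, k ≤ s → r s = 0)
variable (hn : ∀ p, n p = ((Finset.range k).filter (fun s => p + 1 ≤ r s)).card)

include hr_anti hr_zero in
lemma aux_block_sum {M : Type*} [AddCommMonoid M] (f : ℕ → M) :
    ∑ p ∈ Finset.range (r 0), f p
      = ∑ s ∈ Finset.range k, ∑ p ∈ Finset.Ico (r (s+1)) (r s), f p := by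
  have key : ∀ j, ∑ s ∈ Finset.range j, ∑ p ∈ Finset.Ico (r (s+1)) (r s), f p
      = ∑ p ∈ Finset.Ico (r j) (r 0), f p := by
    intro j
    induction j with
    | zero => simp
    | succ j ih =>
      rw [Finset.sum_range_succ, ih]
      rw [add_comm]
      exact Finset.sum_Ico_consecutive f (hr_anti j (j+1) (by omega)) (hr_anti 0 j (by omega))
  rw [key k, hr_zero k (le_refl _)]
  rw [Finset.range_eq_Ico]

include hr_anti hn in
lemma aux_energy_sum :
    ∑ p ∈ Finset.range (r 0), (2*p+1) * n p = ∑ s ∈ Finset.range k, (r s)^2 := by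
  have : ∀ p, (2*p+1) * n p
      = ∑ s ∈ Finset.range k, if p + 1 ≤ r s then (2*p+1) else 0 := by
    intro p
    rw [hn p, Finset.card_filter, Finset.mul_sum]
    apply Finset.sum_congr rfl
    intro s _
    by_cases h : p + 1 ≤ r s <;> simp [h]
  simp_rw [this]
  rw [Finset.sum_comm]
  apply Finset.sum_congr rfl
  intro s hs
  rw [← aux_sum_odd (r s), ← Finset.sum_filter]
  have : (Finset.range (r 0)).filter (fun p => p + 1 ≤ r s) = Finset.range (r s) := by
    ext p
    simp only [Finset.mem_filter, Finset.mem_range]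
    have := hr_anti 0 s (Nat.zero_le _)
    omega
  rw [this]

end

section
variable (k : ℕ) (r : ℕ → ℕ) (n : ℕ → ℕ)
variable (hk : 1 ≤ k)
variable (hr_anti : ∀ i j, i ≤ j → r j ≤ r i) (hr_zero : ∀ s, k ≤ s → r s = 0)
variable (hn : ∀ p, n p = ((Finset.range k).filter (fun s => p + 1 ≤ r s)).card)


include hn in
lemma aux_bound (p : ℕ) :
    (-(n p : ℤ) - 2 * ∑ p' ∈ Finset.range p, (min (n p) (n p') : ℤ))
      = -(((2*p+1) * n p : ℕ) : ℤ) := by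
  have hmin : ∀ p' ∈ Finset.range p, (min (n p) (n p') : ℤ) = (n p : ℤ) := by
    intro p' hp'
    simp only [Finset.mem_range] at hp'
    have h' := aux_n_anti k r n hn (le_of_lt hp')
    exact_mod_cast min_eq_left h'
  rw [Finset.sum_congr rfl hmin, Finset.sum_const, Finset.card_range]
  push_cast
  ring

include hr_anti hn in
lemma card_left_eq_T (N : ℤ) :
    Nat.card {m : Fin (r 0) → ℤ //
        (∀ p : Fin (r 0),
            m p ≤ -(n (p : ℕ) : ℤ)
              - 2 * ∑ p' ∈ Finset.range (p : ℕ), (min (n (p : ℕ)) (n p') : ℤ)) ∧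
        (∀ p : ℕ, (h : p + 1 < r 0) → n (p + 1) = n p →
            m ⟨p + 1, h⟩ ≤ m ⟨p, lt_of_le_of_lt (Nat.le_succ p) h⟩ - 2 * (n p : ℤ)) ∧
        -(∑ p : Fin (r 0), m p) = N}
    = Nat.card {t : Fin (r 0) → ℕ //
        (∀ p : ℕ, (h : p + 1 < r 0) → n (p + 1) = n p →
            t ⟨p, lt_of_le_of_lt (Nat.le_succ p) h⟩ ≤ t ⟨p + 1, h⟩) ∧
        (∑ p : Fin (r 0), (t p : ℤ)) = N - ∑ s ∈ Finset.range k, (r s : ℤ) ^ 2} := by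
  have hE : (∑ p : Fin (r 0), (((2*(p:ℕ)+1) * n p : ℕ) : ℤ))
      = ∑ s ∈ Finset.range k, (r s : ℤ)^2 := by
    rw [Fin.sum_univ_eq_sum_range (fun p => (((2*p+1) * n p : ℕ) : ℤ)) (r 0)]
    rw [← Nat.cast_sum, aux_energy_sum k r n hr_anti hn]
    push_cast
    rfl
  apply Nat.card_congr
  refine
    { toFun := fun x => ⟨fun p => (-(x.1 p) - (((2*(p:ℕ)+1) * n p : ℕ) : ℤ)).toNat, ?_, ?_⟩
      invFun := fun y => ⟨fun p => -(((2*(p:ℕ)+1) * n p : ℕ) : ℤ) - (y.1 p : ℤ), ?_, ?_, ?_⟩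
      left_inv := ?_
      right_inv := ?_ }
  · -- mono
    obtain ⟨m, hm1, hm2, hm3⟩ := x
    intro p h hnp
    have b1 := hm1 ⟨p, lt_of_le_of_lt (Nat.le_succ p) h⟩
    rw [aux_bound k r n hn] at b1
    have b2 := hm2 p h hnp
    apply Int.toNat_le_toNat
    simp only
    have : ((2*(p+1)+1) * n (p+1) : ℕ) = (2*p+1) * n p + 2 * n p := by
      rw [hnp]; ring
    rw [this]
    push_cast at b2 ⊢
    omega
  · -- sum
    obtain ⟨m, hm1, hm2, hm3⟩ := x
    have : ∀ p : Fin (r 0),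
        (((-(m p) - (((2*(p:ℕ)+1) * n p : ℕ) : ℤ)).toNat : ℤ))
          = -(m p) - (((2*(p:ℕ)+1) * n p : ℕ) : ℤ) := by
      intro p
      apply Int.toNat_of_nonneg
      have b1 := hm1 p
      rw [aux_bound k r n hn] at b1
      omega
    simp only
    rw [Finset.sum_congr rfl (fun p _ => this p)]
    rw [Finset.sum_sub_distrib, Finset.sum_neg_distrib, hm3, hE]
  · -- invFun (i)
    obtain ⟨t, ht1, ht2⟩ := y
    intro p
    rw [aux_bound k r n hn]
    simp only
    have : (0:ℤ) ≤ (t p : ℤ) := Int.natCast_nonneg _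
    omega
  · -- invFun (ii)
    obtain ⟨t, ht1, ht2⟩ := y
    intro p h hnp
    have := ht1 p h hnp
    simp only
    have hc : ((2*(p+1)+1) * n (p+1) : ℕ) = (2*p+1) * n p + 2 * n p := by
      rw [hnp]; ring
    rw [hc]
    push_cast
    push_cast at this
    omega
  · -- invFun (iii)
    obtain ⟨t, ht1, ht2⟩ := y
    simp only
    rw [Finset.sum_sub_distrib, ht2, Finset.sum_neg_distrib, hE]
    ring
  · intro x
    obtain ⟨m, hm1, hm2, hm3⟩ := x
    apply Subtype.ext
    funext p
    simp only
    have b1 := hm1 p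
    rw [aux_bound k r n hn] at b1
    rw [Int.toNat_of_nonneg (by omega)]
    ring
  · intro y
    obtain ⟨t, ht1, ht2⟩ := y
    apply Subtype.ext
    funext p
    simp only
    omega

end



def auxExt {R : ℕ} (t : Fin R → ℕ) : ℕ → ℕ := fun p => if h : p < R then t ⟨p, h⟩ else 0

def auxRaw (f : ℕ → ℕ) (a b : ℕ) : List ℕ :=
  (List.range (b - a)).map (fun j => f (b - 1 - j))

def auxParts (f : ℕ → ℕ) (a b : ℕ) : List ℕ :=
  (auxRaw f a b).filter (fun x => 0 < x)

lemma auxRaw_sorted (f : ℕ → ℕ) (a b : ℕ)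
    (hmono : ∀ p q, a ≤ p → p ≤ q → q < b → f p ≤ f q) :
    (auxRaw f a b).Pairwise (· ≥ ·) := by
  unfold auxRaw
  rw [List.pairwise_map]
  refine (List.pairwise_lt_range (n := b - a)).imp_of_mem ?_
  intro j1 j2 h1 h2 hlt
  simp only [List.mem_range] at h1 h2
  exact hmono (b - 1 - j2) (b - 1 - j1) (by omega) (by omega) (by omega)

lemma auxParts_sorted (f : ℕ → ℕ) (a b : ℕ)
    (hmono : ∀ p q, a ≤ p → p ≤ q → q < b → f p ≤ f q) :
    (auxParts f a b).Pairwise (· ≥ ·) :=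
  (auxRaw_sorted f a b hmono).filter _

lemma auxParts_pos (f : ℕ → ℕ) (a b : ℕ) : ∀ x ∈ auxParts f a b, 0 < x := by
  intro x hx
  have := List.of_mem_filter hx
  simpa using this

lemma auxParts_length (f : ℕ → ℕ) (a b : ℕ) : (auxParts f a b).length ≤ b - a := by
  calc (auxParts f a b).length ≤ (auxRaw f a b).length := List.length_filter_le _ _
    _ = b - a := by simp [auxRaw]

lemma aux_list_sum_range (f : ℕ → ℕ) (L : ℕ) :
    ((List.range L).map f).sum = ∑ j ∈ Finset.range L, f j := by
  induction L with
  | zero => simp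
  | succ L ih => rw [List.range_succ, Finset.sum_range_succ, ← ih]; simp

lemma auxParts_sum (f : ℕ → ℕ) (a b : ℕ) (hab : a ≤ b) :
    (auxParts f a b).sum = ∑ p ∈ Finset.Ico a b, f p := by
  rw [auxParts, aux_sum_filter_pos, auxRaw, aux_list_sum_range, aux_reflect f hab]

lemma auxParts_getD (f : ℕ → ℕ) (a b : ℕ)
    (hmono : ∀ p q, a ≤ p → p ≤ q → q < b → f p ≤ f q)
    {idx : ℕ} (hidx : idx < b - a) :
    (auxParts f a b).getD idx 0 = f (b - 1 - idx) := by
  rw [auxParts, aux_getD_filter _ (auxRaw_sorted f a b hmono)]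
  rw [auxRaw]
  rw [List.getD_eq_getElem _ _ (by simpa [auxRaw] using hidx)]
  simp

lemma auxRaw_congr (f g : ℕ → ℕ) (a b : ℕ) (h : ∀ p, a ≤ p → p < b → f p = g p) :
    auxRaw f a b = auxRaw g a b := by
  unfold auxRaw
  apply List.map_congr_left
  intro j hj
  simp only [List.mem_range] at hj
  exact h _ (by omega) (by omega)

lemma auxParts_of_getD (l : List ℕ) (hpos : ∀ x ∈ l, 0 < x) (a b : ℕ)
    (hab : a ≤ b) (hlen : l.length ≤ b - a) :
    auxParts (fun p => l.getD (b - 1 - p) 0) a b = l := by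
  rw [auxParts]
  have : auxRaw (fun p => l.getD (b - 1 - p) 0) a b
      = (List.range (b - a)).map (fun j => l.getD j 0) := by
    unfold auxRaw
    apply List.map_congr_left
    intro j hj
    simp only [List.mem_range] at hj
    show l.getD (b - 1 - (b - 1 - j)) 0 = l.getD j 0
    congr 1
    omega
  rw [this, aux_filter_getD l hpos _ hlen]

section
variable (k : ℕ) (r : ℕ → ℕ) (n : ℕ → ℕ)
variable (hk : 1 ≤ k)
variable (hr_anti : ∀ i j, i ≤ j → r j ≤ r i) (hr_zero : ∀ s, k ≤ s → r s = 0)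
variable (hn : ∀ p, n p = ((Finset.range k).filter (fun s => p + 1 ≤ r s)).card)

include hr_anti hr_zero hn in
lemma aux_chain (t : Fin (r 0) → ℕ)
    (ht1 : ∀ p : ℕ, (h : p + 1 < r 0) → n (p + 1) = n p →
        t ⟨p, lt_of_le_of_lt (Nat.le_succ p) h⟩ ≤ t ⟨p + 1, h⟩)
    {s : ℕ} (hs : s < k) :
    ∀ q p, r (s+1) ≤ p → p ≤ q → q < r s → auxExt t p ≤ auxExt t q := by
  intro q
  induction q with
  | zero =>
    intro p h1 h2 h3
    have : p = 0 := by omega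
    subst this
    exact le_refl _
  | succ q ih =>
    intro p h1 h2 h3
    rcases Nat.eq_or_lt_of_le h2 with rfl | hlt
    · exact le_refl _
    · have hple : p ≤ q := by omega
      have hq3 : q < r s := by omega
      have hr0 : r s ≤ r 0 := hr_anti 0 s (Nat.zero_le _)
      have hq1 : q + 1 < r 0 := by omega
      have hnq : n q = s + 1 :=
        aux_n_eq k r n hr_anti hr_zero hn hs (le_trans h1 hple) hq3
      have hnq1 : n (q+1) = s + 1 :=
        aux_n_eq k r n hr_anti hr_zero hn hs (by omega) (by omega)
      have step := ht1 q hq1 (by rw [hnq, hnq1])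
      have e1 : auxExt t q = t ⟨q, lt_of_le_of_lt (Nat.le_succ q) hq1⟩ := by
        simp [auxExt, show q < r 0 by omega]
      have e2 : auxExt t (q+1) = t ⟨q+1, hq1⟩ := by
        simp [auxExt, hq1]
      calc auxExt t p ≤ auxExt t q := ih p h1 hple hq3
        _ = _ := e1
        _ ≤ _ := step
        _ = auxExt t (q+1) := e2.symm

end

lemma Ptn.ext' : ∀ {a b : Ptn}, a.parts = b.parts → a = b := by
  rintro ⟨pa, sa, xa⟩ ⟨pb, sb, xb⟩ h
  simp only at h
  subst h
  rfl

section
variable (k : ℕ) (r : ℕ → ℕ) (n : ℕ → ℕ)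
variable (hk : 1 ≤ k)
variable (hr_anti : ∀ i j, i ≤ j → r j ≤ r i) (hr_zero : ∀ s, k ≤ s → r s = 0)
variable (hn : ∀ p, n p = ((Finset.range k).filter (fun s => p + 1 ≤ r s)).card)

include hk hr_anti hr_zero hn in
lemma card_T_eq_right (N : ℤ) :
    Nat.card {t : Fin (r 0) → ℕ //
        (∀ p : ℕ, (h : p + 1 < r 0) → n (p + 1) = n p →
            t ⟨p, lt_of_le_of_lt (Nat.le_succ p) h⟩ ≤ t ⟨p + 1, h⟩) ∧
        (∑ p : Fin (r 0), (t p : ℤ)) = N - ∑ s ∈ Finset.range k, (r s : ℤ) ^ 2}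
    = Nat.card {σ : Fin k → Ptn //
          (∀ s : Fin k, (σ s).length ≤ r (s : ℕ) - r ((s : ℕ) + 1)) ∧
          (∑ s : Fin k, ((σ s).size : ℤ))
            = N - ∑ s ∈ Finset.range k, (r s : ℤ) ^ 2} := by
  have hltk : ∀ p : ℕ, n p - 1 < k := fun p => by
    have := aux_n_le_k k r n hn p
    omega
  have hExtSum : ∀ t : Fin (r 0) → ℕ,
      (∑ p ∈ Finset.range (r 0), ((auxExt t p : ℕ) : ℤ)) = ∑ p : Fin (r 0), (t p : ℤ) := by
    intro t
    rw [← Fin.sum_univ_eq_sum_range (fun p => ((auxExt t p : ℕ) : ℤ)) (r 0)]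
    apply Finset.sum_congr rfl
    intro p _
    simp [auxExt, p.isLt]
  apply Nat.card_congr
  refine
    { toFun := fun x =>
        ⟨fun s => ⟨auxParts (auxExt x.1) (r ((s : ℕ) + 1)) (r (s : ℕ)),
            auxParts_sorted _ _ _ (fun p q h1 h2 h3 =>
              aux_chain k r n hr_anti hr_zero hn x.1 x.2.1 s.isLt q p h1 h2 h3),
            auxParts_pos _ _ _⟩, ?_, ?_⟩
      invFun := fun y =>
        ⟨fun p => (y.1 ⟨n (p : ℕ) - 1, hltk (p : ℕ)⟩).parts.getD
            (r (n (p : ℕ) - 1) - 1 - (p : ℕ)) 0, ?_, ?_⟩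
      left_inv := ?_
      right_inv := ?_ }
  · -- lengths
    intro s
    exact auxParts_length _ _ _
  · -- sizes sum
    have eN : ∑ s : Fin k, (auxParts (auxExt x.1) (r ((s : ℕ)+1)) (r (s : ℕ))).sum
        = ∑ p ∈ Finset.range (r 0), auxExt x.1 p := by
      rw [aux_block_sum k r hr_anti hr_zero (auxExt x.1)]
      rw [← Fin.sum_univ_eq_sum_range
        (fun s => ∑ p ∈ Finset.Ico (r (s+1)) (r s), auxExt x.1 p) k]
      exact Finset.sum_congr rfl fun s _ =>
        auxParts_sum _ _ _ (hr_anti _ _ (Nat.le_succ _))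
    show (∑ s : Fin k,
        (((auxParts (auxExt x.1) (r ((s : ℕ)+1)) (r (s : ℕ))).sum : ℕ) : ℤ))
        = N - ∑ s ∈ Finset.range k, (r s : ℤ)^2
    rw [← Nat.cast_sum, eN, Nat.cast_sum, hExtSum]
    exact x.2.2
  · -- invFun mono
    intro p h hne
    show (y.1 ⟨n p - 1, hltk p⟩).parts.getD (r (n p - 1) - 1 - p) 0
        ≤ (y.1 ⟨n (p+1) - 1, hltk (p+1)⟩).parts.getD (r (n (p+1) - 1) - 1 - (p+1)) 0
    simp only [hne]
    exact aux_getD_anti _ (y.1 ⟨n p - 1, hltk p⟩).sorted (by omega)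
  · -- invFun sum
    rw [← hExtSum (fun p => (y.1 ⟨n (p : ℕ) - 1, hltk (p : ℕ)⟩).parts.getD
        (r (n (p : ℕ) - 1) - 1 - (p : ℕ)) 0)]
    rw [aux_block_sum k r hr_anti hr_zero]
    rw [← Fin.sum_univ_eq_sum_range (fun s => ∑ p ∈ Finset.Ico (r (s+1)) (r s),
        ((auxExt (fun p : Fin (r 0) => (y.1 ⟨n (p : ℕ) - 1, hltk (p : ℕ)⟩).parts.getD
          (r (n (p : ℕ) - 1) - 1 - (p : ℕ)) 0) p : ℕ) : ℤ)) k]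
    have key : ∀ s : Fin k,
        (∑ p ∈ Finset.Ico (r ((s : ℕ)+1)) (r (s : ℕ)),
          ((auxExt (fun p : Fin (r 0) => (y.1 ⟨n (p : ℕ) - 1, hltk (p : ℕ)⟩).parts.getD
            (r (n (p : ℕ) - 1) - 1 - (p : ℕ)) 0) p : ℕ) : ℤ))
          = (((y.1 s).parts.sum : ℕ) : ℤ) := by
      intro s
      have hrs0 : r (s : ℕ) ≤ r 0 := hr_anti 0 (s : ℕ) (Nat.zero_le _)
      have step1 : ∀ p ∈ Finset.Ico (r ((s : ℕ)+1)) (r (s : ℕ)),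
          ((auxExt (fun p : Fin (r 0) => (y.1 ⟨n (p : ℕ) - 1, hltk (p : ℕ)⟩).parts.getD
            (r (n (p : ℕ) - 1) - 1 - (p : ℕ)) 0) p : ℕ) : ℤ)
          = (((y.1 s).parts.getD (r (s : ℕ) - 1 - p) 0 : ℕ) : ℤ) := by
        intro p hp
        simp only [Finset.mem_Ico] at hp
        have hp0 : p < r 0 := by omega
        have hnp : n p = (s : ℕ) + 1 :=
          aux_n_eq k r n hr_anti hr_zero hn s.isLt hp.1 hp.2
        simp only [auxExt, hp0, dif_pos]
        simp only [hnp, Nat.add_sub_cancel, Fin.eta]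
      rw [Finset.sum_congr rfl step1]
      rw [← aux_reflect (fun p => (((y.1 s).parts.getD (r (s : ℕ) - 1 - p) 0 : ℕ) : ℤ))
        (hr_anti _ _ (Nat.le_succ (s : ℕ)))]
      have step2 : ∀ j ∈ Finset.range (r (s : ℕ) - r ((s : ℕ)+1)),
          (((y.1 s).parts.getD (r (s : ℕ) - 1 - (r (s : ℕ) - 1 - j)) 0 : ℕ) : ℤ)
          = (((y.1 s).parts.getD j 0 : ℕ) : ℤ) := by
        intro j hj
        simp only [Finset.mem_range] at hj
        congr 2
        omega
      rw [Finset.sum_congr rfl step2, ← Nat.cast_sum,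
        aux_sum_getD _ _ (le_trans (y.2.1 s) (le_refl _))]
    rw [Finset.sum_congr rfl (fun s _ => key s)]
    have := y.2.2
    simp only [Ptn.size] at this
    exact this
  · -- left_inv
    intro x
    apply Subtype.ext
    funext p
    have hp := p.isLt
    have h1 : 1 ≤ n (p : ℕ) := aux_n_pos k r n hk hn hp
    have h2 : r (n (p : ℕ)) ≤ (p : ℕ) := aux_r_n_le k r n hr_anti hr_zero hn
    have h3 : (p : ℕ) < r (n (p : ℕ) - 1) := aux_lt_r_n k r n hr_anti hn h1
    have h11 : n (p : ℕ) - 1 + 1 = n (p : ℕ) := by omega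
    show (auxParts (auxExt x.1) (r ((n (p : ℕ) - 1) + 1)) (r (n (p : ℕ) - 1))).getD
        (r (n (p : ℕ) - 1) - 1 - (p : ℕ)) 0 = x.1 p
    rw [h11]
    have hmono : ∀ a b', r (n (p : ℕ)) ≤ a → a ≤ b' → b' < r (n (p : ℕ) - 1) →
        auxExt x.1 a ≤ auxExt x.1 b' := by
      intro a b' ha hab hb
      exact aux_chain k r n hr_anti hr_zero hn x.1 x.2.1 (hltk (p : ℕ)) b' a
        (by rw [h11]; exact ha) hab hb
    rw [auxParts_getD (auxExt x.1) (r (n (p : ℕ))) (r (n (p : ℕ) - 1)) hmono (by omega)]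
    have hidx : r (n (p : ℕ) - 1) - 1 - (r (n (p : ℕ) - 1) - 1 - (p : ℕ)) = (p : ℕ) := by
      omega
    rw [hidx]
    simp [auxExt, hp]
  · -- right_inv
    intro y
    apply Subtype.ext
    funext s
    apply Ptn.ext'
    show auxParts (auxExt (fun p : Fin (r 0) =>
        (y.1 ⟨n (p : ℕ) - 1, hltk (p : ℕ)⟩).parts.getD
          (r (n (p : ℕ) - 1) - 1 - (p : ℕ)) 0)) (r ((s : ℕ)+1)) (r (s : ℕ))
      = (y.1 s).parts
    have hagree : ∀ p, r ((s : ℕ)+1) ≤ p → p < r (s : ℕ) →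
        auxExt (fun p : Fin (r 0) =>
          (y.1 ⟨n (p : ℕ) - 1, hltk (p : ℕ)⟩).parts.getD
            (r (n (p : ℕ) - 1) - 1 - (p : ℕ)) 0) p
        = (fun p => (y.1 s).parts.getD (r (s : ℕ) - 1 - p) 0) p := by
      intro p hp1 hp2
      have hrs0 : r (s : ℕ) ≤ r 0 := hr_anti 0 (s : ℕ) (Nat.zero_le _)
      have hp0 : p < r 0 := by omega
      have hnp : n p = (s : ℕ) + 1 :=
        aux_n_eq k r n hr_anti hr_zero hn s.isLt hp1 hp2
      simp only [auxExt, hp0, dif_pos]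
      simp only [hnp, Nat.add_sub_cancel, Fin.eta]
    rw [auxParts, auxRaw_congr _ (fun p => (y.1 s).parts.getD (r (s : ℕ) - 1 - p) 0) _ _
      hagree]
    exact auxParts_of_getD (y.1 s).parts (y.1 s).pos _ _
      (hr_anti _ _ (Nat.le_succ (s : ℕ))) (y.2.1 s)

end

/-- Fix `k ≥ 1` and nonnegative integers `r⁽¹⁾ ≥ … ≥ r⁽ᵏ⁾ ≥ 0`
(encoded by an antitone `r : ℕ → ℕ` vanishing from index `k` on, with the
convention `r⁽ᵏ⁺¹⁾ = 0`; here `r s` denotes `r⁽ˢ⁺¹⁾`), and define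
`n_p = #{s ∈ {1,…,k} : r⁽ˢ⁾ ≥ p}` (here `n p` denotes `n_{p+1}`).  Then for every
integer `N`, the number of integer sequences `(m_p)_{p=1}^{r⁽¹⁾}` satisfying the
difference conditions (i), (ii) and total energy condition (iii), equals the number
of `k`-tuples of partitions `(σ⁽¹⁾, …, σ⁽ᵏ⁾)` with `ℓ(σ⁽ˢ⁾) ≤ r⁽ˢ⁾ − r⁽ˢ⁺¹⁾` and
`Σ_s |σ⁽ˢ⁾| = N − Σ_s (r⁽ˢ⁾)²`. -/
theorem card_energy_sequences_eq_card_partition_tuples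
    (k : ℕ) (hk : 1 ≤ k) (r : ℕ → ℕ)
    (hr_anti : ∀ i j, i ≤ j → r j ≤ r i)
    (hr_zero : ∀ s, k ≤ s → r s = 0)
    (n : ℕ → ℕ)
    (hn : ∀ p, n p = ((Finset.range k).filter (fun s => p + 1 ≤ r s)).card)
    (N : ℤ) :
    Nat.card {m : Fin (r 0) → ℤ //
        (∀ p : Fin (r 0),
            m p ≤ -(n (p : ℕ) : ℤ)
              - 2 * ∑ p' ∈ Finset.range (p : ℕ), (min (n (p : ℕ)) (n p') : ℤ)) ∧
        (∀ p : ℕ, (h : p + 1 < r 0) → n (p + 1) = n p →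
            m ⟨p + 1, h⟩ ≤ m ⟨p, lt_of_le_of_lt (Nat.le_succ p) h⟩ - 2 * (n p : ℤ)) ∧
        -(∑ p : Fin (r 0), m p) = N}
      = Nat.card {σ : Fin k → Ptn //
          (∀ s : Fin k, (σ s).length ≤ r (s : ℕ) - r ((s : ℕ) + 1)) ∧
          (∑ s : Fin k, ((σ s).size : ℤ))
            = N - ∑ s ∈ Finset.range k, (r s : ℤ) ^ 2} := by
  rw [card_left_eq_T k r n hr_anti hn N]
  exact card_T_eq_right k r n hk hr_anti hr_zero hn N
end

section
/- Fix an integer k ≥ 1. For every integer m and all nonnegative integers r₁, r₂, the number of k-admissible quasi-particle data of color-type (r₂, r₁) and total energy m is equal to the sum, over all pairs (ρ, σ) where ρ = (r₁⁽¹⁾ ≥ … ≥ r₁⁽ᵏ⁾ ≥ 0) is a weakly decreasing tuple of nonnegative integers with Σ_{s=1}^{k} r₁⁽ˢ⁾ = r₁ and σ = (r₂⁽¹⁾ ≥ … ≥ r₂⁽²ᵏ⁾ ≥ 0) is a weakly decreasing tuple of nonnegative integers with Σ_{s=1}^{2k} r₂⁽ˢ⁾ = r₂, of the number of tuples of partitions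 (π⁽¹⁾, …, π⁽ᵏ⁾, τ⁽¹⁾, …, τ⁽²ᵏ⁾) with ℓ(π⁽ˢ⁾) ≤ r₁⁽ˢ⁾ − r₁⁽ˢ⁺¹⁾ (convention r₁⁽ᵏ⁺¹⁾ = 0), ℓ(τ⁽ˢ⁾) ≤ r₂⁽ˢ⁾ − r₂⁽ˢ⁺¹⁾ (convention r₂⁽²ᵏ⁺¹⁾ = 0), and Σ_{s=1}^{k} |π⁽ˢ⁾| + Σ_{s=1}^{2k} |τ⁽ˢ⁾| = m − E(ρ,σ), where E(ρ,σ) = Σ_{s=1}^{k} (r₁⁽ˢ⁾)² + Σ_{s=1}^{2k} (r₂⁽ˢ⁾)² − Σ_{s=1}^{k} r₁⁽ˢ⁾·(r₂⁽²ˢ⁻¹⁾ + r₂⁽²ˢ⁾). -/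
/-- A quasi-particle datum for type `B₂⁽¹⁾`: numbers `P₁, P₂ ≥ 0` of quasi-particles of
colors 1 and 2, charges `n_{P_i,i} ≤ … ≤ n_{1,i}` (all positive) and energies
`m_{p,i} ∈ ℤ` satisfying the difference conditions (D1)–(D4).  We use 0-based
indexing: the field value `n1 p` is the paper's `n_{p+1,1}` (so `n1 0 = n_{1,1}` is the
largest color-1 charge), and similarly for `n2`, `m1`, `m2`.  Charges and energies are
normalized to be `0` outside the index range, so that each quasi-particle datum is
represented by exactly one term of this type. -/
structure QPData where
  P1 : ℕ
  P2 : ℕ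
  n1 : ℕ → ℕ
  n2 : ℕ → ℕ
  m1 : ℕ → ℤ
  m2 : ℕ → ℤ
  n1_pos : ∀ p, p < P1 → 0 < n1 p
  n2_pos : ∀ p, p < P2 → 0 < n2 p
  n1_anti : ∀ p q, p ≤ q → q < P1 → n1 q ≤ n1 p
  n2_anti : ∀ p q, p ≤ q → q < P2 → n2 q ≤ n2 p
  n1_zero : ∀ p, P1 ≤ p → n1 p = 0
  n2_zero : ∀ p, P2 ≤ p → n2 p = 0
  m1_zero : ∀ p, P1 ≤ p → m1 p = 0
  m2_zero : ∀ p, P2 ≤ p → m2 p = 0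
  D1 : ∀ p, p < P1 →
    m1 p ≤ -(n1 p : ℤ) - 2 * ∑ p' ∈ Finset.range p, (min (n1 p) (n1 p') : ℤ)
  D2 : ∀ p, p + 1 < P1 → n1 (p + 1) = n1 p → m1 (p + 1) ≤ m1 p - 2 * (n1 p : ℤ)
  D3 : ∀ p, p < P2 →
    m2 p ≤ -(n2 p : ℤ) + ∑ q ∈ Finset.range P1, (min (2 * n1 q) (n2 p) : ℤ)
      - 2 * ∑ p' ∈ Finset.range p, (min (n2 p) (n2 p') : ℤ)
  D4 : ∀ p, p + 1 < P2 → n2 (p + 1) = n2 p → m2 (p + 1) ≤ m2 p - 2 * (n2 p : ℤ)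

/-- The color-type `(r₂, r₁)` of a quasi-particle datum. -/
def QPData.colorType (d : QPData) : ℕ × ℕ :=
  (∑ p ∈ Finset.range d.P2, d.n2 p, ∑ p ∈ Finset.range d.P1, d.n1 p)

/-- The total energy `−Σ_{i,p} m_{p,i}` of a quasi-particle datum. -/
def QPData.energy (d : QPData) : ℤ :=
  -(∑ p ∈ Finset.range d.P1, d.m1 p + ∑ p ∈ Finset.range d.P2, d.m2 p)

/-- `k`-admissibility: all color-1 charges are at most `k` and all color-2 charges are
at most `2k` (equivalently, `n_{1,1} ≤ k` and `n_{1,2} ≤ 2k`, vacuously if `P_i = 0`). -/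
def QPData.Admissible (k : ℕ) (d : QPData) : Prop :=
  (∀ p, p < d.P1 → d.n1 p ≤ k) ∧ (∀ p, p < d.P2 → d.n2 p ≤ 2 * k)

namespace QPAux


/-- Downward-closed finsets of ℕ are initial segments. -/
lemma mem_iff_lt_card (S : Finset ℕ) (h : ∀ a b : ℕ, a ≤ b → b ∈ S → a ∈ S) (p : ℕ) :
    p ∈ S ↔ p < S.card := by
  constructor
  · intro hp
    have hsub : Finset.range (p + 1) ⊆ S := by
      intro a ha; exact h a p (by have := Finset.mem_range.mp ha; omega) hp
    simpa using Finset.card_le_card hsub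
  · intro hp
    by_contra hcon
    have hsub : S ⊆ Finset.range p := by
      intro b hb
      by_contra hbp
      exact hcon (h p b (by simpa using hbp) hb)
    have := Finset.card_le_card hsub
    simp at this; omega

/-- `cnt n P s = #{p < P : n p > s}`. -/
def cnt (n : ℕ → ℕ) (P s : ℕ) : ℕ := ((Finset.range P).filter (fun p => s < n p)).card

lemma lt_cnt_iff {n : ℕ → ℕ} {P : ℕ} (hanti : ∀ p q : ℕ, p ≤ q → n q ≤ n p)
    (hzero : ∀ p, P ≤ p → n p = 0) (s p : ℕ) :
    p < cnt n P s ↔ s < n p := by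
  have := mem_iff_lt_card ((Finset.range P).filter (fun p => s < n p)) ?_ p
  · rw [cnt, ← this, Finset.mem_filter, Finset.mem_range]
    constructor
    · rintro ⟨_, h⟩; exact h
    · intro h
      refine ⟨?_, h⟩
      by_contra hP
      rw [hzero p (by omega)] at h; omega
  · intro a b hab hb
    rw [Finset.mem_filter, Finset.mem_range] at *
    obtain ⟨hb1, hb2⟩ := hb
    refine ⟨by omega, lt_of_lt_of_le hb2 (hanti a b hab)⟩

lemma cnt_anti (n : ℕ → ℕ) (P : ℕ) {s t : ℕ} (h : s ≤ t) : cnt n P t ≤ cnt n P s := by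
  apply Finset.card_le_card
  intro p hp
  rw [Finset.mem_filter] at *
  exact ⟨hp.1, by omega⟩

lemma cnt_eq_zero {n : ℕ → ℕ} {P K : ℕ} (hK : ∀ p, p < P → n p ≤ K) {s : ℕ} (hs : K ≤ s) :
    cnt n P s = 0 := by
  rw [cnt, Finset.card_eq_zero, Finset.filter_eq_empty_iff]
  intro p hp
  have := hK p (Finset.mem_range.mp hp)
  omega

lemma cnt_le (n : ℕ → ℕ) (P s : ℕ) : cnt n P s ≤ P := by
  simpa [cnt] using Finset.card_le_card (Finset.filter_subset _ (Finset.range P))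

lemma sum_cnt {n : ℕ → ℕ} {P K : ℕ} (hK : ∀ p, p < P → n p ≤ K) :
    ∑ s ∈ Finset.range K, cnt n P s = ∑ p ∈ Finset.range P, n p := by
  have h1 : ∀ s, cnt n P s = ∑ p ∈ Finset.range P, if s < n p then 1 else 0 := by
    intro s; rw [cnt, Finset.card_filter]
  simp_rw [h1]
  rw [Finset.sum_comm]
  apply Finset.sum_congr rfl
  intro p hp
  have hnp := hK p (Finset.mem_range.mp hp)
  have : (Finset.range K).filter (fun s => s < n p) = Finset.range (n p) := by
    ext s; simp [Finset.mem_filter]; omega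
  rw [← Finset.card_filter, this, Finset.card_range]

/-- conjugate duality -/
lemma cnt_cnt {ρ : ℕ → ℕ} {K : ℕ} (hanti : ∀ s t : ℕ, s ≤ t → ρ t ≤ ρ s)
    (hzero : ∀ s, K ≤ s → ρ s = 0) (s : ℕ) :
    cnt (cnt ρ K) (ρ 0) s = ρ s := by
  have hanti' : ∀ p q : ℕ, p ≤ q → cnt ρ K q ≤ cnt ρ K p := fun p q h => cnt_anti ρ K h
  have hzero' : ∀ p, ρ 0 ≤ p → cnt ρ K p = 0 := by
    intro p hp
    rw [cnt, Finset.card_eq_zero, Finset.filter_eq_empty_iff]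
    intro t ht
    have := hanti 0 t (Nat.zero_le t)
    omega
  have key : ∀ p, p < cnt (cnt ρ K) (ρ 0) s ↔ p < ρ s := by
    intro p
    rw [lt_cnt_iff hanti' hzero' s p, lt_cnt_iff hanti hzero p s]
  have h1 := key (cnt (cnt ρ K) (ρ 0) s)
  have h2 := key (ρ s)
  omega


lemma cnt_eq_sum (n : ℕ → ℕ) (P s : ℕ) :
    cnt n P s = ∑ p ∈ Finset.range P, if s < n p then 1 else 0 := Finset.card_filter _ _

/-- double counting of min sums -/
lemma sum_min_eq {a b : ℕ → ℕ} {P Q K : ℕ} (ha : ∀ p, p < P → a p ≤ K)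
    (hb : ∀ q, q < Q → b q ≤ K) :
    ∑ p ∈ Finset.range P, ∑ q ∈ Finset.range Q, min (a p) (b q)
      = ∑ s ∈ Finset.range K, cnt a P s * cnt b Q s := by
  have key : ∀ p q, p < P → q < Q →
      min (a p) (b q) = ∑ s ∈ Finset.range K,
        ((if s < a p then 1 else 0) * (if s < b q then 1 else 0)) := by
    intro p q hp hq
    have h1 : ∀ s : ℕ, ((if s < a p then 1 else 0) * (if s < b q then 1 else 0))
        = if s < a p ∧ s < b q then 1 else 0 := by
      intro s
      by_cases h1 : s < a p <;> by_cases h2 : s < b q <;> simp [h1, h2]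
    simp_rw [h1]
    rw [← Finset.card_filter]
    have : (Finset.range K).filter (fun s => s < a p ∧ s < b q)
        = Finset.range (min (a p) (b q)) := by
      ext s
      simp only [Finset.mem_filter, Finset.mem_range]
      have := ha p hp; have := hb q hq
      omega
    rw [this, Finset.card_range]
  rw [Finset.sum_congr rfl (fun p hp => Finset.sum_congr rfl (fun q hq =>
    key p q (Finset.mem_range.mp hp) (Finset.mem_range.mp hq)))]
  rw [Finset.sum_congr rfl (fun p _ => Finset.sum_comm)]
  rw [Finset.sum_comm]
  apply Finset.sum_congr rfl
  intro s _
  rw [cnt_eq_sum, cnt_eq_sum, Finset.sum_mul]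
  apply Finset.sum_congr rfl
  intro p _
  rw [Finset.mul_sum]



lemma sum_sym_split (f : ℕ → ℕ → ℤ) (hf : ∀ p q, f p q = f q p) (P : ℕ) :
    ∑ p ∈ Finset.range P, ∑ q ∈ Finset.range P, f p q
      = 2 * (∑ p ∈ Finset.range P, ∑ q ∈ Finset.range p, f p q)
        + ∑ p ∈ Finset.range P, f p p := by
  induction P with
  | zero => simp
  | succ P ih =>
    rw [Finset.sum_range_succ, Finset.sum_range_succ (f := fun p => ∑ q ∈ Finset.range p, f p q),
      Finset.sum_range_succ (f := fun p => f p p),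
      Finset.sum_congr rfl (fun p (hp : p ∈ Finset.range P) =>
        Finset.sum_range_succ (f p) P), Finset.sum_add_distrib, ih]
    have : ∑ p ∈ Finset.range P, f p P = ∑ q ∈ Finset.range P, f P q := by
      exact Finset.sum_congr rfl (fun p _ => hf p P)
    rw [this, Finset.sum_range_succ (f P) P]; ring

lemma sum_range_two_mul (K : ℕ) (f : ℕ → ℤ) :
    ∑ s ∈ Finset.range (2 * K), f s
      = ∑ u ∈ Finset.range K, (f (2 * u) + f (2 * u + 1)) := by
  induction K with
  | zero => simp
  | succ K ih =>
    have h2 : 2 * (K + 1) = (2 * K + 1) + 1 := by ring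
    rw [h2, Finset.sum_range_succ, Finset.sum_range_succ, Finset.sum_range_succ, ih]
    ring

/-- sum over blocks -/
lemma sum_blocks (c : ℕ → ℕ) (K : ℕ) (hanti : ∀ s t : ℕ, s ≤ t → c t ≤ c s)
    (hK : c K = 0) (f : ℕ → ℤ) :
    ∑ s ∈ Finset.range K, ∑ p ∈ Finset.Ico (c (s + 1)) (c s), f p
      = ∑ p ∈ Finset.range (c 0), f p := by
  have main : ∀ J, J ≤ K → ∑ s ∈ Finset.range J, ∑ p ∈ Finset.Ico (c (s + 1)) (c s), f p
      = ∑ p ∈ Finset.Ico (c J) (c 0), f p := by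
    intro J
    induction J with
    | zero => simp
    | succ J ih =>
      intro hJ
      rw [Finset.sum_range_succ, ih (by omega),
        ← Finset.sum_Ico_consecutive f (hanti J (J+1) (by omega)) (hanti 0 J (by omega))]
      ring
  have := main K (le_refl K)
  rw [this, hK, Finset.range_eq_Ico]



lemma sorted_eq_filter_append (l : List ℕ) (h : l.Pairwise (· ≥ ·)) :
    l = l.filter (fun x => x ≠ 0)
      ++ List.replicate (l.length - (l.filter (fun x => x ≠ 0)).length) 0 := by
  induction l with
  | nil => simp
  | cons a l ih =>
    rw [List.pairwise_cons] at h
    obtain ⟨hle, hs⟩ := h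
    by_cases ha : a = 0
    · have hall : ∀ b ∈ a :: l, b = 0 := by
        intro b hb
        rcases List.mem_cons.mp hb with h | h
        · omega
        · have := hle b h; omega
      have hfil : (a :: l).filter (fun x => x ≠ 0) = [] := by
        rw [List.filter_eq_nil_iff]
        intro b hb
        simpa using hall b hb
      rw [hfil]
      simp only [List.nil_append, List.length_nil, Nat.sub_zero]
      rw [List.eq_replicate_iff]
      exact ⟨rfl, hall⟩
    · have hfil : (a :: l).filter (fun x => x ≠ 0) = a :: l.filter (fun x => x ≠ 0) := by
        rw [List.filter_cons_of_pos (by simpa using ha)]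
      rw [hfil]
      simp only [List.length_cons, List.cons_append, List.cons.injEq, true_and]
      have hlen : (l.filter (fun x => x ≠ 0)).length ≤ l.length :=
        List.length_filter_le _ _
      rw [show l.length + 1 - ((l.filter (fun x => x ≠ 0)).length + 1)
          = l.length - (l.filter (fun x => x ≠ 0)).length from by omega]
      exact ih hs

lemma getD_append_replicate (lf : List ℕ) (z j : ℕ) (hj : lf.length ≤ j) :
    (lf ++ List.replicate z 0).getD j 0 = 0 := by
  by_cases h : j < lf.length + z
  · rw [List.getD_eq_getElem _ _ (by simp; omega), List.getElem_append_right (by omega)]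
    simp
  · rw [List.getD_eq_default _ _ (by simp; omega)]

lemma getD_filter (l : List ℕ) (h : l.Pairwise (· ≥ ·)) (j : ℕ) :
    (l.filter (fun x => x ≠ 0)).getD j 0 = l.getD j 0 := by
  have key := sorted_eq_filter_append l h
  set lf := l.filter (fun x => x ≠ 0) with hlf
  set z := l.length - lf.length with hz
  rcases lt_or_ge j lf.length with hj | hj
  · conv_rhs => rw [key]
    rw [List.getD_eq_getElem _ _ hj, List.getD_eq_getElem _ _ (by simp; omega),
      List.getElem_append_left hj]
  · rw [List.getD_eq_default _ _ hj]
    conv_rhs => rw [key]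
    rw [getD_append_replicate _ _ _ hj]

lemma sum_filter_ne_zero (l : List ℕ) (h : l.Pairwise (· ≥ ·)) :
    (l.filter (fun x => x ≠ 0)).sum = l.sum := by
  have key := sorted_eq_filter_append l h
  conv_rhs => rw [key]
  simp

lemma getD_anti (l : List ℕ) (h : l.Pairwise (· ≥ ·)) {i j : ℕ} (hij : i ≤ j) :
    l.getD j 0 ≤ l.getD i 0 := by
  rcases lt_or_ge j l.length with hj | hj
  · rw [List.getD_eq_getElem _ _ hj, List.getD_eq_getElem _ _ (by omega)]
    rcases eq_or_lt_of_le hij with rfl | hlt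
    · exact le_refl _
    · exact (List.pairwise_iff_getElem.mp h) i j (by omega) hj hlt
  · rw [List.getD_eq_default _ _ hj]
    exact Nat.zero_le _

lemma sum_getD (l : List ℕ) (t : ℕ) (h : l.length ≤ t) :
    ∑ j ∈ Finset.range t, l.getD j 0 = l.sum := by
  induction l generalizing t with
  | nil => simp
  | cons a l ih =>
    cases t with
    | zero => simp at h
    | succ t =>
      rw [Finset.sum_range_succ']
      simp only [List.getD_cons_succ, List.getD_cons_zero, List.sum_cons]
      rw [ih t (by simpa using h)]
      ring

lemma list_sum_map_range (t : ℕ) (f : ℕ → ℕ) :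
    ((List.range t).map f).sum = ∑ j ∈ Finset.range t, f j := by
  induction t with
  | zero => simp
  | succ t ih => rw [List.range_succ, Finset.sum_range_succ, List.map_append, List.sum_append, ih]; simp

def toList (t : ℕ) (g : ℕ → ℕ) : List ℕ :=
  ((List.range t).map (fun j => g (t - 1 - j))).filter (fun x => x ≠ 0)

lemma pre_sorted (t : ℕ) (g : ℕ → ℕ) (hmono : ∀ i j, i ≤ j → j < t → g i ≤ g j) :
    ((List.range t).map (fun j => g (t - 1 - j))).Pairwise (· ≥ ·) := by
  rw [List.pairwise_iff_getElem]
  intro i j hi hj hij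
  simp only [List.length_map, List.length_range] at hi hj
  simp only [List.getElem_map, List.getElem_range]
  exact hmono (t - 1 - j) (t - 1 - i) (by omega) (by omega)

lemma toList_sorted (t : ℕ) (g : ℕ → ℕ) (hmono : ∀ i j, i ≤ j → j < t → g i ≤ g j) :
    (toList t g).Pairwise (· ≥ ·) :=
  List.Pairwise.sublist List.filter_sublist (pre_sorted t g hmono)

lemma toList_pos (t : ℕ) (g : ℕ → ℕ) : ∀ x ∈ toList t g, 0 < x := by
  intro x hx
  rw [toList, List.mem_filter] at hx
  have := hx.2
  simp at this
  omega

lemma toList_length (t : ℕ) (g : ℕ → ℕ) : (toList t g).length ≤ t := by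
  rw [toList]
  exact le_trans (List.length_filter_le _ _) (by simp)

lemma toList_getD (t : ℕ) (g : ℕ → ℕ) (hmono : ∀ i j, i ≤ j → j < t → g i ≤ g j) (j : ℕ) :
    (toList t g).getD j 0 = if j < t then g (t - 1 - j) else 0 := by
  rw [toList, getD_filter _ (pre_sorted t g hmono)]
  by_cases hj : j < t
  · rw [List.getD_eq_getElem _ _ (by simpa using hj)]
    simp [hj]
  · rw [List.getD_eq_default _ _ (by simpa using hj)]
    simp [hj]

lemma toList_sum (t : ℕ) (g : ℕ → ℕ) (hmono : ∀ i j, i ≤ j → j < t → g i ≤ g j) :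
    (toList t g).sum = ∑ j ∈ Finset.range t, g j := by
  rw [toList, sum_filter_ne_zero _ (pre_sorted t g hmono), list_sum_map_range,
    Finset.sum_range_reflect]


end QPAux

section Main
open QPAux

variable (k : ℕ)

/-- The color-1 bound function. -/
def Bfun (n : ℕ → ℕ) (p : ℕ) : ℤ :=
  -(n p : ℤ) - 2 * ∑ p' ∈ Finset.range p, (min (n p) (n p') : ℤ)

/-- The color-2 bound function. -/
def B2fun (n1 n2 : ℕ → ℕ) (P1 p : ℕ) : ℤ :=
  -(n2 p : ℤ) + ∑ q ∈ Finset.range P1, (min (2 * n1 q) (n2 p) : ℤ)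
    - 2 * ∑ p' ∈ Finset.range p, (min (n2 p) (n2 p') : ℤ)

lemma Bfun_step (n : ℕ → ℕ) (p : ℕ) (h : n (p + 1) = n p) :
    Bfun n (p + 1) = Bfun n p - 2 * (n p : ℤ) := by
  rw [Bfun, Bfun, h, Finset.sum_range_succ]
  simp only [min_self]
  ring

lemma B2fun_step (n1 n2 : ℕ → ℕ) (P1 p : ℕ) (h : n2 (p + 1) = n2 p) :
    B2fun n1 n2 P1 (p + 1) = B2fun n1 n2 P1 p - 2 * (n2 p : ℤ) := by
  rw [B2fun, B2fun, h, Finset.sum_range_succ]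
  simp only [min_self]
  ring

variable {d : QPData}

lemma n1_anti' (d : QPData) : ∀ p q : ℕ, p ≤ q → d.n1 q ≤ d.n1 p := by
  intro p q h
  rcases lt_or_ge q d.P1 with hq | hq
  · exact d.n1_anti p q h hq
  · rw [d.n1_zero q hq]; exact Nat.zero_le _

lemma n2_anti' (d : QPData) : ∀ p q : ℕ, p ≤ q → d.n2 q ≤ d.n2 p := by
  intro p q h
  rcases lt_or_ge q d.P2 with hq | hq
  · exact d.n2_anti p q h hq
  · rw [d.n2_zero q hq]; exact Nat.zero_le _

lemma lt_cnt1_iff (d : QPData) (s p : ℕ) : p < cnt d.n1 d.P1 s ↔ s < d.n1 p :=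
  lt_cnt_iff (n1_anti' d) d.n1_zero s p

lemma lt_cnt2_iff (d : QPData) (s p : ℕ) : p < cnt d.n2 d.P2 s ↔ s < d.n2 p :=
  lt_cnt_iff (n2_anti' d) d.n2_zero s p

lemma cnt1_zero (d : QPData) : cnt d.n1 d.P1 0 = d.P1 := by
  rw [cnt]
  rw [Finset.filter_true_of_mem, Finset.card_range]
  intro p hp
  exact d.n1_pos p (Finset.mem_range.mp hp)

lemma cnt2_zero (d : QPData) : cnt d.n2 d.P2 0 = d.P2 := by
  rw [cnt]
  rw [Finset.filter_true_of_mem, Finset.card_range]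
  intro p hp
  exact d.n2_pos p (Finset.mem_range.mp hp)

lemma charge1_eq (d : QPData) {p s : ℕ} (h1 : cnt d.n1 d.P1 (s + 1) ≤ p)
    (h2 : p < cnt d.n1 d.P1 s) : d.n1 p = s + 1 := by
  have a := (lt_cnt1_iff d s p).mp h2
  have b := lt_cnt1_iff d (s + 1) p
  omega

lemma charge2_eq (d : QPData) {p s : ℕ} (h1 : cnt d.n2 d.P2 (s + 1) ≤ p)
    (h2 : p < cnt d.n2 d.P2 s) : d.n2 p = s + 1 := by
  have a := (lt_cnt2_iff d s p).mp h2
  have b := lt_cnt2_iff d (s + 1) p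
  omega

/-- the slack of a color-1 quasiparticle -/
def slack1 (d : QPData) (p : ℕ) : ℤ := Bfun d.n1 p - d.m1 p

/-- the slack of a color-2 quasiparticle -/
def slack2 (d : QPData) (p : ℕ) : ℤ := B2fun d.n1 d.n2 d.P1 p - d.m2 p

lemma slack1_nonneg (d : QPData) {p : ℕ} (hp : p < d.P1) : 0 ≤ slack1 d p := by
  have := d.D1 p hp
  rw [slack1, Bfun]
  omega

lemma slack2_nonneg (d : QPData) {p : ℕ} (hp : p < d.P2) : 0 ≤ slack2 d p := by
  have := d.D3 p hp
  rw [slack2, B2fun]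
  omega

lemma slack1_mono (d : QPData) {s p q : ℕ} (h1 : cnt d.n1 d.P1 (s + 1) ≤ p)
    (hpq : p ≤ q) (h2 : q < cnt d.n1 d.P1 s) : slack1 d p ≤ slack1 d q := by
  induction q with
  | zero =>
    have hp0 : p = 0 := by omega
    rw [hp0]
  | succ q ih =>
    rcases Nat.lt_or_ge p (q + 1) with hlt | hge
    · have hq2 : q < cnt d.n1 d.P1 s := by omega
      have step : slack1 d q ≤ slack1 d (q + 1) := by
        have hc1 : d.n1 q = s + 1 := charge1_eq d (by omega) hq2
        have hc2 : d.n1 (q + 1) = s + 1 := charge1_eq d (by omega) h2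
        have hP : q + 1 < d.P1 := lt_of_lt_of_le h2 (cnt_le _ _ _)
        have hD2 := d.D2 q hP (by omega)
        have hB := Bfun_step d.n1 q (by omega)
        rw [slack1, slack1, hB]
        omega
      exact le_trans (ih (by omega) hq2) step
    · have : p = q + 1 := by omega
      rw [this]

lemma slack2_mono (d : QPData) {s p q : ℕ} (h1 : cnt d.n2 d.P2 (s + 1) ≤ p)
    (hpq : p ≤ q) (h2 : q < cnt d.n2 d.P2 s) : slack2 d p ≤ slack2 d q := by
  induction q with
  | zero =>
    have hp0 : p = 0 := by omega
    rw [hp0]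
  | succ q ih =>
    rcases Nat.lt_or_ge p (q + 1) with hlt | hge
    · have hq2 : q < cnt d.n2 d.P2 s := by
        omega
      have step : slack2 d q ≤ slack2 d (q + 1) := by
        have hc1 : d.n2 q = s + 1 := charge2_eq d (by omega) hq2
        have hc2 : d.n2 (q + 1) = s + 1 := charge2_eq d (by omega) h2
        have hP : q + 1 < d.P2 := lt_of_lt_of_le h2 (cnt_le _ _ _)
        have hD4 := d.D4 q hP (by omega)
        have hB := B2fun_step d.n1 d.n2 d.P1 q (by omega)
        rw [slack2, slack2, hB]
        omega
      exact le_trans (ih (by omega) hq2) step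
    · have : p = q + 1 := by omega
      rw [this]

end Main
section Main2
open QPAux

variable {k : ℕ}

lemma sum_B1 (d : QPData) (hA : ∀ p, p < d.P1 → d.n1 p ≤ k) :
    ∑ p ∈ Finset.range d.P1, Bfun d.n1 p
      = -∑ s ∈ Finset.range k, (cnt d.n1 d.P1 s : ℤ) ^ 2 := by
  have hnat := sum_min_eq (a := d.n1) (b := d.n1) (P := d.P1) (Q := d.P1) (K := k) hA hA
  have hfull : ∑ p ∈ Finset.range d.P1, ∑ q ∈ Finset.range d.P1, (min (d.n1 p) (d.n1 q) : ℤ)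
      = ∑ s ∈ Finset.range k, (cnt d.n1 d.P1 s : ℤ) ^ 2 := by
    have := congrArg (fun x : ℕ => (x : ℤ)) hnat
    push_cast at this
    rw [this]
    apply Finset.sum_congr rfl
    intro s _
    ring
  have hsym := sum_sym_split (fun p q => (min (d.n1 p) (d.n1 q) : ℤ))
    (fun p q => min_comm _ _) d.P1
  have hB : ∑ p ∈ Finset.range d.P1, Bfun d.n1 p
      = -(∑ p ∈ Finset.range d.P1, (d.n1 p : ℤ))
        - 2 * ∑ p ∈ Finset.range d.P1, ∑ q ∈ Finset.range p, (min (d.n1 p) (d.n1 q) : ℤ) := by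
    simp only [Bfun]
    rw [Finset.sum_sub_distrib, ← Finset.sum_neg_distrib, Finset.mul_sum]
  have hdiag : ∑ p ∈ Finset.range d.P1, (min (d.n1 p) (d.n1 p) : ℤ)
      = ∑ p ∈ Finset.range d.P1, (d.n1 p : ℤ) := by simp
  linarith [hsym, hfull, hB, hdiag]

lemma sum_B2 (d : QPData) (hA1 : ∀ p, p < d.P1 → d.n1 p ≤ k)
    (hA2 : ∀ p, p < d.P2 → d.n2 p ≤ 2 * k) :
    ∑ p ∈ Finset.range d.P2, B2fun d.n1 d.n2 d.P1 p
      = -∑ s ∈ Finset.range (2 * k), (cnt d.n2 d.P2 s : ℤ) ^ 2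
        + ∑ u ∈ Finset.range k, (cnt d.n1 d.P1 u : ℤ)
            * ((cnt d.n2 d.P2 (2 * u) : ℤ) + (cnt d.n2 d.P2 (2 * u + 1) : ℤ)) := by
  have hnat := sum_min_eq (a := d.n2) (b := d.n2) (P := d.P2) (Q := d.P2) (K := 2 * k) hA2 hA2
  have hfull : ∑ p ∈ Finset.range d.P2, ∑ q ∈ Finset.range d.P2, (min (d.n2 p) (d.n2 q) : ℤ)
      = ∑ s ∈ Finset.range (2 * k), (cnt d.n2 d.P2 s : ℤ) ^ 2 := by
    have := congrArg (fun x : ℕ => (x : ℤ)) hnat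
    push_cast at this
    rw [this]
    apply Finset.sum_congr rfl
    intro s _
    ring
  have hsym := sum_sym_split (fun p q => (min (d.n2 p) (d.n2 q) : ℤ))
    (fun p q => min_comm _ _) d.P2
  have hcrossnat := sum_min_eq (a := fun q => 2 * d.n1 q) (b := d.n2) (P := d.P1)
    (Q := d.P2) (K := 2 * k) (fun q hq => by have := hA1 q hq; show 2 * d.n1 q ≤ 2 * k; omega) hA2
  have hc2n1 : ∀ s, cnt (fun q => 2 * d.n1 q) d.P1 s = cnt d.n1 d.P1 (s / 2) := by
    intro s
    unfold QPAux.cnt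
    congr 1
    apply Finset.filter_congr
    intro q _
    simp only [eq_iff_iff]
    omega
  have hcross : ∑ p ∈ Finset.range d.P2, ∑ q ∈ Finset.range d.P1,
        (min (2 * d.n1 q) (d.n2 p) : ℤ)
      = ∑ u ∈ Finset.range k, (cnt d.n1 d.P1 u : ℤ)
          * ((cnt d.n2 d.P2 (2 * u) : ℤ) + (cnt d.n2 d.P2 (2 * u + 1) : ℤ)) := by
    rw [Finset.sum_comm]
    have := congrArg (fun x : ℕ => (x : ℤ)) hcrossnat
    push_cast at this
    rw [this]
    simp_rw [hc2n1]
    rw [sum_range_two_mul k (fun s => (cnt d.n1 d.P1 (s / 2) : ℤ) * (cnt d.n2 d.P2 s : ℤ))]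
    apply Finset.sum_congr rfl
    intro u _
    have e1 : 2 * u / 2 = u := by omega
    have e2 : (2 * u + 1) / 2 = u := by omega
    rw [e1, e2]
    ring
  have hB : ∑ p ∈ Finset.range d.P2, B2fun d.n1 d.n2 d.P1 p
      = -(∑ p ∈ Finset.range d.P2, (d.n2 p : ℤ))
        + ∑ p ∈ Finset.range d.P2, ∑ q ∈ Finset.range d.P1, (min (2 * d.n1 q) (d.n2 p) : ℤ)
        - 2 * ∑ p ∈ Finset.range d.P2, ∑ q ∈ Finset.range p, (min (d.n2 p) (d.n2 q) : ℤ) := by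
    simp only [B2fun]
    rw [Finset.sum_sub_distrib, Finset.sum_add_distrib, ← Finset.sum_neg_distrib,
      Finset.mul_sum]
  have hdiag : ∑ p ∈ Finset.range d.P2, (min (d.n2 p) (d.n2 p) : ℤ)
      = ∑ p ∈ Finset.range d.P2, (d.n2 p : ℤ) := by simp
  linarith [hsym, hfull, hB, hdiag, hcross]

end Main2
section Main3
open QPAux

lemma toList_zero (g : ℕ → ℕ) : toList 0 g = [] := rfl

lemma nat_eq_of_lt_iff {a b : ℕ} (h : ∀ y, y < a ↔ y < b) : a = b := by
  have h1 := h a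
  have h2 := h b
  omega

lemma hmono1 (d : QPData) (s : ℕ) : ∀ i j, i ≤ j → j < cnt d.n1 d.P1 s - cnt d.n1 d.P1 (s+1) →
    (slack1 d (cnt d.n1 d.P1 (s+1) + i)).toNat ≤ (slack1 d (cnt d.n1 d.P1 (s+1) + j)).toNat := by
  intro i j hij hj
  exact Int.toNat_le_toNat (slack1_mono d (s := s) (by omega) (by omega) (by omega))

lemma hmono2 (d : QPData) (s : ℕ) : ∀ i j, i ≤ j → j < cnt d.n2 d.P2 s - cnt d.n2 d.P2 (s+1) →
    (slack2 d (cnt d.n2 d.P2 (s+1) + i)).toNat ≤ (slack2 d (cnt d.n2 d.P2 (s+1) + j)).toNat := by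
  intro i j hij hj
  exact Int.toNat_le_toNat (slack2_mono d (s := s) (by omega) (by omega) (by omega))

/-- forward color-1 partitions -/
def fwdPtn1 (d : QPData) (s : ℕ) : Ptn where
  parts := toList (cnt d.n1 d.P1 s - cnt d.n1 d.P1 (s+1))
    (fun j => (slack1 d (cnt d.n1 d.P1 (s+1) + j)).toNat)
  sorted := toList_sorted _ _ (hmono1 d s)
  pos := toList_pos _ _

/-- forward color-2 partitions -/
def fwdPtn2 (d : QPData) (s : ℕ) : Ptn where
  parts := toList (cnt d.n2 d.P2 s - cnt d.n2 d.P2 (s+1))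
    (fun j => (slack2 d (cnt d.n2 d.P2 (s+1) + j)).toNat)
  sorted := toList_sorted _ _ (hmono2 d s)
  pos := toList_pos _ _

lemma fwdPtn1_parts (d : QPData) (s : ℕ) : (fwdPtn1 d s).parts
    = toList (cnt d.n1 d.P1 s - cnt d.n1 d.P1 (s+1))
      (fun j => (slack1 d (cnt d.n1 d.P1 (s+1) + j)).toNat) := rfl

lemma fwdPtn2_parts (d : QPData) (s : ℕ) : (fwdPtn2 d s).parts
    = toList (cnt d.n2 d.P2 s - cnt d.n2 d.P2 (s+1))
      (fun j => (slack2 d (cnt d.n2 d.P2 (s+1) + j)).toNat) := rfl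

lemma fwdPtn1_length (d : QPData) (s : ℕ) :
    (fwdPtn1 d s).length ≤ cnt d.n1 d.P1 s - cnt d.n1 d.P1 (s+1) := by
  show (fwdPtn1 d s).parts.length ≤ _
  rw [fwdPtn1_parts]
  exact toList_length _ _

lemma fwdPtn2_length (d : QPData) (s : ℕ) :
    (fwdPtn2 d s).length ≤ cnt d.n2 d.P2 s - cnt d.n2 d.P2 (s+1) := by
  show (fwdPtn2 d s).parts.length ≤ _
  rw [fwdPtn2_parts]
  exact toList_length _ _

lemma fwdPtn1_empty {k : ℕ} (d : QPData) (hA : ∀ p, p < d.P1 → d.n1 p ≤ k) {s : ℕ}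
    (hs : k ≤ s) : (fwdPtn1 d s).parts = [] := by
  have h1 : cnt d.n1 d.P1 s = 0 := cnt_eq_zero hA hs
  rw [fwdPtn1_parts, h1, Nat.zero_sub]
  exact toList_zero _

lemma fwdPtn2_empty {k : ℕ} (d : QPData) (hA : ∀ p, p < d.P2 → d.n2 p ≤ 2 * k) {s : ℕ}
    (hs : 2 * k ≤ s) : (fwdPtn2 d s).parts = [] := by
  have h1 : cnt d.n2 d.P2 s = 0 := cnt_eq_zero hA hs
  rw [fwdPtn2_parts, h1, Nat.zero_sub]
  exact toList_zero _

lemma fwdPtn1_getD (d : QPData) {s p : ℕ} (h1 : cnt d.n1 d.P1 (s+1) ≤ p)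
    (h2 : p < cnt d.n1 d.P1 s) :
    ((fwdPtn1 d s).parts.getD (cnt d.n1 d.P1 s - 1 - p) 0 : ℤ) = slack1 d p := by
  rw [fwdPtn1_parts, toList_getD _ _ (hmono1 d s)]
  rw [if_pos (by omega)]
  have harg : cnt d.n1 d.P1 (s+1) + (cnt d.n1 d.P1 s - cnt d.n1 d.P1 (s+1) - 1
      - (cnt d.n1 d.P1 s - 1 - p)) = p := by omega
  rw [harg]
  exact Int.toNat_of_nonneg (slack1_nonneg d (lt_of_lt_of_le h2 (cnt_le _ _ _)))

lemma fwdPtn2_getD (d : QPData) {s p : ℕ} (h1 : cnt d.n2 d.P2 (s+1) ≤ p)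
    (h2 : p < cnt d.n2 d.P2 s) :
    ((fwdPtn2 d s).parts.getD (cnt d.n2 d.P2 s - 1 - p) 0 : ℤ) = slack2 d p := by
  rw [fwdPtn2_parts, toList_getD _ _ (hmono2 d s)]
  rw [if_pos (by omega)]
  have harg : cnt d.n2 d.P2 (s+1) + (cnt d.n2 d.P2 s - cnt d.n2 d.P2 (s+1) - 1
      - (cnt d.n2 d.P2 s - 1 - p)) = p := by omega
  rw [harg]
  exact Int.toNat_of_nonneg (slack2_nonneg d (lt_of_lt_of_le h2 (cnt_le _ _ _)))

lemma fwdPtn1_size (d : QPData) (s : ℕ) :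
    ((fwdPtn1 d s).size : ℤ) = ∑ p ∈ Finset.Ico (cnt d.n1 d.P1 (s+1)) (cnt d.n1 d.P1 s),
      slack1 d p := by
  show ((fwdPtn1 d s).parts.sum : ℤ) = _
  rw [fwdPtn1_parts, toList_sum _ _ (hmono1 d s)]
  rw [Finset.sum_Ico_eq_sum_range]
  push_cast
  apply Finset.sum_congr rfl
  intro j hj
  rw [Finset.mem_range] at hj
  have hlt : cnt d.n1 d.P1 (s+1) + j < d.P1 := by
    have := cnt_le d.n1 d.P1 s
    omega
  exact Int.toNat_of_nonneg (slack1_nonneg d hlt)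

lemma fwdPtn2_size (d : QPData) (s : ℕ) :
    ((fwdPtn2 d s).size : ℤ) = ∑ p ∈ Finset.Ico (cnt d.n2 d.P2 (s+1)) (cnt d.n2 d.P2 s),
      slack2 d p := by
  show ((fwdPtn2 d s).parts.sum : ℤ) = _
  rw [fwdPtn2_parts, toList_sum _ _ (hmono2 d s)]
  rw [Finset.sum_Ico_eq_sum_range]
  push_cast
  apply Finset.sum_congr rfl
  intro j hj
  rw [Finset.mem_range] at hj
  have hlt : cnt d.n2 d.P2 (s+1) + j < d.P2 := by
    have := cnt_le d.n2 d.P2 s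
    omega
  exact Int.toNat_of_nonneg (slack2_nonneg d hlt)

end Main3
section Main4
open QPAux

/-- backward construction of a quasi-particle datum -/
def bwd (k : ℕ) (ρ σ : ℕ → ℕ) (π τ : ℕ → Ptn) (hk : 1 ≤ k)
    (hρa : ∀ i j : ℕ, i ≤ j → ρ j ≤ ρ i) (hρ0 : ∀ s, k ≤ s → ρ s = 0)
    (hσa : ∀ i j : ℕ, i ≤ j → σ j ≤ σ i) (hσ0 : ∀ s, 2 * k ≤ s → σ s = 0) : QPData where
  P1 := ρ 0
  P2 := σ 0
  n1 := cnt ρ k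
  n2 := cnt σ (2 * k)
  m1 := fun p => if p < ρ 0 then Bfun (cnt ρ k) p
    - ((π (cnt ρ k p - 1)).parts.getD (ρ (cnt ρ k p - 1) - 1 - p) 0 : ℤ) else 0
  m2 := fun p => if p < σ 0 then B2fun (cnt ρ k) (cnt σ (2 * k)) (ρ 0) p
    - ((τ (cnt σ (2 * k) p - 1)).parts.getD (σ (cnt σ (2 * k) p - 1) - 1 - p) 0 : ℤ) else 0
  n1_pos := by
    intro p hp
    rw [cnt, Finset.card_pos]
    exact ⟨0, by simp; omega⟩
  n2_pos := by
    intro p hp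
    rw [cnt, Finset.card_pos]
    exact ⟨0, by simp; omega⟩
  n1_anti := fun p q h _ => cnt_anti ρ k h
  n2_anti := fun p q h _ => cnt_anti σ (2 * k) h
  n1_zero := fun p hp => cnt_eq_zero (fun s _ => le_trans (hρa 0 s (Nat.zero_le _)) hp)
    (le_refl p)
  n2_zero := fun p hp => cnt_eq_zero (fun s _ => le_trans (hσa 0 s (Nat.zero_le _)) hp)
    (le_refl p)
  m1_zero := fun p hp => by beta_reduce; rw [if_neg (by omega)]
  m2_zero := fun p hp => by beta_reduce; rw [if_neg (by omega)]
  D1 := by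
    intro p hp
    beta_reduce
    rw [if_pos hp]
    have h1 : (0 : ℤ) ≤ ((π (cnt ρ k p - 1)).parts.getD (ρ (cnt ρ k p - 1) - 1 - p) 0 : ℤ) :=
      Int.natCast_nonneg _
    rw [Bfun] at *
    omega
  D2 := by
    intro p hp hn
    beta_reduce
    rw [if_pos (by omega), if_pos (by omega), hn, Bfun_step (cnt ρ k) p hn]
    have hgd := getD_anti (π (cnt ρ k p - 1)).parts (π (cnt ρ k p - 1)).sorted
      (i := ρ (cnt ρ k p - 1) - 1 - (p + 1)) (j := ρ (cnt ρ k p - 1) - 1 - p) (by omega)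
    have hcast := Int.ofNat_le.mpr hgd
    push_cast at hcast
    omega
  D3 := by
    intro p hp
    beta_reduce
    rw [if_pos hp]
    have h1 : (0 : ℤ) ≤ ((τ (cnt σ (2 * k) p - 1)).parts.getD
        (σ (cnt σ (2 * k) p - 1) - 1 - p) 0 : ℤ) := Int.natCast_nonneg _
    rw [B2fun] at *
    omega
  D4 := by
    intro p hp hn
    beta_reduce
    rw [if_pos (by omega), if_pos (by omega), hn, B2fun_step (cnt ρ k) (cnt σ (2 * k)) (ρ 0) p hn]
    have hgd := getD_anti (τ (cnt σ (2 * k) p - 1)).parts (τ (cnt σ (2 * k) p - 1)).sorted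
      (i := σ (cnt σ (2 * k) p - 1) - 1 - (p + 1)) (j := σ (cnt σ (2 * k) p - 1) - 1 - p)
      (by omega)
    have hcast := Int.ofNat_le.mpr hgd
    push_cast at hcast
    omega

end Main4
section Main5
open QPAux

lemma qp_ext (d e : QPData) (h1 : d.P1 = e.P1) (h2 : d.P2 = e.P2) (h3 : d.n1 = e.n1)
    (h4 : d.n2 = e.n2) (h5 : d.m1 = e.m1) (h6 : d.m2 = e.m2) : d = e := by
  cases d; cases e
  dsimp at h1 h2 h3 h4 h5 h6
  subst h1; subst h2; subst h3; subst h4; subst h5; subst h6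
  rfl

lemma ptn_ext (a b : Ptn) (h : a.parts = b.parts) : a = b := by
  cases a; cases b
  dsimp at h
  subst h
  rfl

lemma map_getD_range (l : List ℕ) (t : ℕ) (h : l.length ≤ t) :
    (List.range t).map (fun j => l.getD j 0) = l ++ List.replicate (t - l.length) 0 := by
  apply List.ext_getElem
  · simp; omega
  · intro j hj hj'
    simp only [List.getElem_map, List.getElem_range]
    rcases lt_or_ge j l.length with hl | hl
    · rw [List.getD_eq_getElem _ _ hl, List.getElem_append_left hl]
    · rw [List.getD_eq_default _ _ hl, List.getElem_append_right hl, List.getElem_replicate]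

lemma map_getD_filter (l : List ℕ) (t : ℕ) (hlen : l.length ≤ t) (hpos : ∀ x ∈ l, 0 < x) :
    ((List.range t).map (fun j => l.getD j 0)).filter (fun x => x ≠ 0) = l := by
  rw [map_getD_range l t hlen, List.filter_append]
  have h1 : l.filter (fun x => x ≠ 0) = l := by
    rw [List.filter_eq_self]
    intro x hx
    have := hpos x hx
    simp
    omega
  have h2 : (List.replicate (t - l.length) 0).filter (fun x => (x : ℕ) ≠ 0) = [] := by
    rw [List.filter_eq_nil_iff]
    intro x hx
    have := List.eq_of_mem_replicate hx
    simp [this]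
  rw [h1, h2, List.append_nil]

end Main5
section Main6
open QPAux

lemma sum_Ico_getD (l : List ℕ) (a b : ℕ) (h : l.length ≤ b - a) :
    ∑ p ∈ Finset.Ico a b, l.getD (b - 1 - p) 0 = l.sum := by
  rw [Finset.sum_Ico_eq_sum_range]
  have hcg : ∀ j ∈ Finset.range (b - a), l.getD (b - 1 - (a + j)) 0
      = l.getD ((b - a) - 1 - j) 0 := by
    intro j hj
    rw [Finset.mem_range] at hj
    congr 1
    omega
  rw [Finset.sum_congr rfl hcg, Finset.sum_range_reflect (fun j => l.getD j 0) (b - a),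
    sum_getD l (b - a) h]

variable {k : ℕ} {ρ σ : ℕ → ℕ} {π τ : ℕ → Ptn} {hk : 1 ≤ k}
  {hρa : ∀ i j : ℕ, i ≤ j → ρ j ≤ ρ i} {hρ0 : ∀ s, k ≤ s → ρ s = 0}
  {hσa : ∀ i j : ℕ, i ≤ j → σ j ≤ σ i} {hσ0 : ∀ s, 2 * k ≤ s → σ s = 0}

lemma bwd_P1 : (bwd k ρ σ π τ hk hρa hρ0 hσa hσ0).P1 = ρ 0 := rfl
lemma bwd_P2 : (bwd k ρ σ π τ hk hρa hρ0 hσa hσ0).P2 = σ 0 := rfl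
lemma bwd_n1 : (bwd k ρ σ π τ hk hρa hρ0 hσa hσ0).n1 = cnt ρ k := rfl
lemma bwd_n2 : (bwd k ρ σ π τ hk hρa hρ0 hσa hσ0).n2 = cnt σ (2 * k) := rfl
lemma bwd_m1 (p : ℕ) : (bwd k ρ σ π τ hk hρa hρ0 hσa hσ0).m1 p
    = (if p < ρ 0 then Bfun (cnt ρ k) p
      - ((π (cnt ρ k p - 1)).parts.getD (ρ (cnt ρ k p - 1) - 1 - p) 0 : ℤ) else 0) := rfl
lemma bwd_m2 (p : ℕ) : (bwd k ρ σ π τ hk hρa hρ0 hσa hσ0).m2 p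
    = (if p < σ 0 then B2fun (cnt ρ k) (cnt σ (2 * k)) (ρ 0) p
      - ((τ (cnt σ (2 * k) p - 1)).parts.getD (σ (cnt σ (2 * k) p - 1) - 1 - p) 0 : ℤ)
      else 0) := rfl

/-- charge of index p for the backward datum -/
lemma bwd_charge {s p : ℕ} (hρa' : ∀ i j : ℕ, i ≤ j → ρ j ≤ ρ i)
    (hρ0' : ∀ u, k ≤ u → ρ u = 0) (h1 : ρ (s + 1) ≤ p) (h2 : p < ρ s) :
    cnt ρ k p = s + 1 := by
  have a1 := lt_cnt_iff hρa' hρ0' p s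
  have a2 := lt_cnt_iff hρa' hρ0' p (s + 1)
  omega

lemma sum_bwd_slack1 (hρa' : ∀ i j : ℕ, i ≤ j → ρ j ≤ ρ i)
    (hρ0' : ∀ u, k ≤ u → ρ u = 0)
    (hlen : ∀ s, s < k → (π s).length ≤ ρ s - ρ (s + 1)) :
    ∑ p ∈ Finset.range (ρ 0),
        ((π (cnt ρ k p - 1)).parts.getD (ρ (cnt ρ k p - 1) - 1 - p) 0 : ℤ)
      = ∑ s ∈ Finset.range k, ((π s).size : ℤ) := by
  rw [← sum_blocks ρ k hρa' (hρ0' k (le_refl k))]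
  apply Finset.sum_congr rfl
  intro s hs
  rw [Finset.mem_range] at hs
  have hcg : ∀ p ∈ Finset.Ico (ρ (s + 1)) (ρ s),
      ((π (cnt ρ k p - 1)).parts.getD (ρ (cnt ρ k p - 1) - 1 - p) 0 : ℤ)
        = ((π s).parts.getD (ρ s - 1 - p) 0 : ℤ) := by
    intro p hp
    rw [Finset.mem_Ico] at hp
    have := bwd_charge (k := k) hρa' hρ0' hp.1 hp.2
    rw [this]
    simp
  rw [Finset.sum_congr rfl hcg]
  rw [← Nat.cast_sum]
  rw [sum_Ico_getD _ _ _ (by have := hlen s hs; rw [Ptn.length] at this; omega)]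
  rfl

lemma sum_bwd_slack2 (hσa' : ∀ i j : ℕ, i ≤ j → σ j ≤ σ i)
    (hσ0' : ∀ u, 2 * k ≤ u → σ u = 0)
    (hlen : ∀ s, s < 2 * k → (τ s).length ≤ σ s - σ (s + 1)) :
    ∑ p ∈ Finset.range (σ 0),
        ((τ (cnt σ (2 * k) p - 1)).parts.getD (σ (cnt σ (2 * k) p - 1) - 1 - p) 0 : ℤ)
      = ∑ s ∈ Finset.range (2 * k), ((τ s).size : ℤ) := by
  rw [← sum_blocks σ (2 * k) hσa' (hσ0' (2 * k) (le_refl _))]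
  apply Finset.sum_congr rfl
  intro s hs
  rw [Finset.mem_range] at hs
  have hcg : ∀ p ∈ Finset.Ico (σ (s + 1)) (σ s),
      ((τ (cnt σ (2 * k) p - 1)).parts.getD (σ (cnt σ (2 * k) p - 1) - 1 - p) 0 : ℤ)
        = ((τ s).parts.getD (σ s - 1 - p) 0 : ℤ) := by
    intro p hp
    rw [Finset.mem_Ico] at hp
    have := bwd_charge (k := 2 * k) hσa' hσ0' hp.1 hp.2
    rw [this]
    simp
  rw [Finset.sum_congr rfl hcg]
  rw [← Nat.cast_sum]
  rw [sum_Ico_getD _ _ _ (by have := hlen s hs; rw [Ptn.length] at this; omega)]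
  rfl

end Main6
section Main7
open QPAux

def LHSty (k : ℕ) (m : ℤ) (r1 r2 : ℕ) : Type :=
  {d : QPData // d.Admissible k ∧ d.colorType = (r2, r1) ∧ d.energy = m}

def RHSty (k : ℕ) (m : ℤ) (r1 r2 : ℕ) : Type :=
  {x : (ℕ → ℕ) × (ℕ → ℕ) × (ℕ → Ptn) × (ℕ → Ptn) //
          (∀ i j, i ≤ j → x.1 j ≤ x.1 i) ∧ (∀ s, k ≤ s → x.1 s = 0) ∧
          (∑ s ∈ Finset.range k, x.1 s = r1) ∧
          (∀ i j, i ≤ j → x.2.1 j ≤ x.2.1 i) ∧ (∀ s, 2 * k ≤ s → x.2.1 s = 0) ∧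
          (∑ s ∈ Finset.range (2 * k), x.2.1 s = r2) ∧
          (∀ s, s < k → (x.2.2.1 s).length ≤ x.1 s - x.1 (s + 1)) ∧
          (∀ s, k ≤ s → (x.2.2.1 s).parts = []) ∧
          (∀ s, s < 2 * k → (x.2.2.2 s).length ≤ x.2.1 s - x.2.1 (s + 1)) ∧
          (∀ s, 2 * k ≤ s → (x.2.2.2 s).parts = []) ∧
          ((∑ s ∈ Finset.range k, ((x.2.2.1 s).size : ℤ))
              + ∑ s ∈ Finset.range (2 * k), ((x.2.2.2 s).size : ℤ)
            = m - ((∑ s ∈ Finset.range k, (x.1 s : ℤ) ^ 2)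
                + (∑ s ∈ Finset.range (2 * k), (x.2.1 s : ℤ) ^ 2)
                - ∑ s ∈ Finset.range k,
                    (x.1 s : ℤ) * ((x.2.1 (2 * s) : ℤ) + (x.2.1 (2 * s + 1) : ℤ))))}

def fwdFun (k : ℕ) (m : ℤ) (r1 r2 : ℕ) : LHSty k m r1 r2 → RHSty k m r1 r2 :=
  fun x => ⟨(cnt x.val.n1 x.val.P1, cnt x.val.n2 x.val.P2, fwdPtn1 x.val, fwdPtn2 x.val), by
    obtain ⟨d, ⟨hA1, hA2⟩, hC, hE⟩ := x
    have hC1 : ∑ p ∈ Finset.range d.P1, d.n1 p = r1 := congrArg Prod.snd hC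
    have hC2 : ∑ p ∈ Finset.range d.P2, d.n2 p = r2 := congrArg Prod.fst hC
    refine ⟨fun i j h => cnt_anti d.n1 d.P1 h, fun s hs => cnt_eq_zero hA1 hs,
      by rw [sum_cnt hA1]; exact hC1,
      fun i j h => cnt_anti d.n2 d.P2 h, fun s hs => cnt_eq_zero hA2 hs,
      by rw [sum_cnt hA2]; exact hC2,
      fun s _ => fwdPtn1_length d s, fun s hs => fwdPtn1_empty d hA1 hs,
      fun s _ => fwdPtn2_length d s, fun s hs => fwdPtn2_empty d hA2 hs, ?_⟩
    have hblocks1 : ∑ s ∈ Finset.range k, ∑ p ∈ Finset.Ico (cnt d.n1 d.P1 (s + 1))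
          (cnt d.n1 d.P1 s), slack1 d p = ∑ p ∈ Finset.range d.P1, slack1 d p := by
      have := sum_blocks (cnt d.n1 d.P1) k (fun s t h => cnt_anti _ _ h)
        (cnt_eq_zero hA1 (le_refl k)) (slack1 d)
      rw [cnt1_zero d] at this
      exact this
    have hblocks2 : ∑ s ∈ Finset.range (2 * k), ∑ p ∈ Finset.Ico (cnt d.n2 d.P2 (s + 1))
          (cnt d.n2 d.P2 s), slack2 d p = ∑ p ∈ Finset.range d.P2, slack2 d p := by
      have := sum_blocks (cnt d.n2 d.P2) (2 * k) (fun s t h => cnt_anti _ _ h)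
        (cnt_eq_zero hA2 (le_refl (2 * k))) (slack2 d)
      rw [cnt2_zero d] at this
      exact this
    have hsz1 : ∑ s ∈ Finset.range k, ((fwdPtn1 d s).size : ℤ)
        = ∑ p ∈ Finset.range d.P1, slack1 d p := by
      rw [← hblocks1]
      exact Finset.sum_congr rfl (fun s _ => fwdPtn1_size d s)
    have hsz2 : ∑ s ∈ Finset.range (2 * k), ((fwdPtn2 d s).size : ℤ)
        = ∑ p ∈ Finset.range d.P2, slack2 d p := by
      rw [← hblocks2]
      exact Finset.sum_congr rfl (fun s _ => fwdPtn2_size d s)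
    have hsub1 : ∑ p ∈ Finset.range d.P1, slack1 d p
        = ∑ p ∈ Finset.range d.P1, Bfun d.n1 p - ∑ p ∈ Finset.range d.P1, d.m1 p := by
      rw [← Finset.sum_sub_distrib]
      exact Finset.sum_congr rfl (fun p _ => rfl)
    have hsub2 : ∑ p ∈ Finset.range d.P2, slack2 d p
        = ∑ p ∈ Finset.range d.P2, B2fun d.n1 d.n2 d.P1 p
          - ∑ p ∈ Finset.range d.P2, d.m2 p := by
      rw [← Finset.sum_sub_distrib]
      exact Finset.sum_congr rfl (fun p _ => rfl)
    have hb1 := sum_B1 (k := k) d hA1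
    have hb2 := sum_B2 (k := k) d hA1 hA2
    have hE' : -(∑ p ∈ Finset.range d.P1, d.m1 p + ∑ p ∈ Finset.range d.P2, d.m2 p) = m := hE
    show (∑ s ∈ Finset.range k, ((fwdPtn1 d s).size : ℤ))
        + ∑ s ∈ Finset.range (2 * k), ((fwdPtn2 d s).size : ℤ)
      = m - ((∑ s ∈ Finset.range k, (cnt d.n1 d.P1 s : ℤ) ^ 2)
          + (∑ s ∈ Finset.range (2 * k), (cnt d.n2 d.P2 s : ℤ) ^ 2)
          - ∑ s ∈ Finset.range k, (cnt d.n1 d.P1 s : ℤ)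
              * ((cnt d.n2 d.P2 (2 * s) : ℤ) + (cnt d.n2 d.P2 (2 * s + 1) : ℤ)))
    rw [hsz1, hsz2, hsub1, hsub2]
    linarith [hb1, hb2, hE']⟩

def bwdFun (k : ℕ) (m : ℤ) (r1 r2 : ℕ) (hk : 1 ≤ k) : RHSty k m r1 r2 → LHSty k m r1 r2 :=
  fun x =>
    ⟨bwd k x.val.1 x.val.2.1 x.val.2.2.1 x.val.2.2.2 hk x.prop.1 x.prop.2.1
      x.prop.2.2.2.1 x.prop.2.2.2.2.1, by
      obtain ⟨⟨ρ, σ, π, τ⟩, h1, h2, h3, h4, h5, h6, h7, h8, h9, h10, h11⟩ := x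
      have hcc1 : ∀ u, cnt (cnt ρ k) (ρ 0) u = ρ u := cnt_cnt h1 h2
      have hcc2 : ∀ u, cnt (cnt σ (2 * k)) (σ 0) u = σ u := cnt_cnt h4 h5
      refine ⟨⟨fun p _ => cnt_le ρ k p, fun p _ => cnt_le σ (2 * k) p⟩, ?_, ?_⟩
      · show (∑ p ∈ Finset.range (σ 0), cnt σ (2 * k) p,
            ∑ p ∈ Finset.range (ρ 0), cnt ρ k p) = (r2, r1)
        rw [Prod.mk.injEq]
        constructor
        · rw [sum_cnt (fun s _ => h4 0 s (Nat.zero_le s))]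
          exact h6
        · rw [sum_cnt (fun s _ => h1 0 s (Nat.zero_le s))]
          exact h3
      · show -(∑ p ∈ Finset.range (ρ 0), (bwd k ρ σ π τ hk h1 h2 h4 h5).m1 p
            + ∑ p ∈ Finset.range (σ 0), (bwd k ρ σ π τ hk h1 h2 h4 h5).m2 p) = m
        have hm1 : ∑ p ∈ Finset.range (ρ 0), (bwd k ρ σ π τ hk h1 h2 h4 h5).m1 p
            = ∑ p ∈ Finset.range (ρ 0), Bfun (cnt ρ k) p
              - ∑ p ∈ Finset.range (ρ 0),
                  ((π (cnt ρ k p - 1)).parts.getD (ρ (cnt ρ k p - 1) - 1 - p) 0 : ℤ) := by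
          rw [← Finset.sum_sub_distrib]
          apply Finset.sum_congr rfl
          intro p hp
          rw [bwd_m1, if_pos (Finset.mem_range.mp hp)]
        have hm2 : ∑ p ∈ Finset.range (σ 0), (bwd k ρ σ π τ hk h1 h2 h4 h5).m2 p
            = ∑ p ∈ Finset.range (σ 0), B2fun (cnt ρ k) (cnt σ (2 * k)) (ρ 0) p
              - ∑ p ∈ Finset.range (σ 0),
                  ((τ (cnt σ (2 * k) p - 1)).parts.getD (σ (cnt σ (2 * k) p - 1) - 1 - p) 0 : ℤ) := by
          rw [← Finset.sum_sub_distrib]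
          apply Finset.sum_congr rfl
          intro p hp
          rw [bwd_m2, if_pos (Finset.mem_range.mp hp)]
        have hsl1 := sum_bwd_slack1 (k := k) (ρ := ρ) (π := π) h1 h2 h7
        have hsl2 := sum_bwd_slack2 (k := k) (σ := σ) (τ := τ) h4 h5 h9
        have hb1 := sum_B1 (k := k) (bwd k ρ σ π τ hk h1 h2 h4 h5)
          (fun p _ => cnt_le ρ k p)
        have hb2 := sum_B2 (k := k) (bwd k ρ σ π τ hk h1 h2 h4 h5)
          (fun p _ => cnt_le ρ k p) (fun p _ => cnt_le σ (2 * k) p)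
        rw [bwd_P1, bwd_n1] at hb1
        simp only [hcc1] at hb1
        rw [bwd_P1, bwd_P2, bwd_n1, bwd_n2] at hb2
        simp only [hcc1, hcc2] at hb2
        rw [hm1, hm2]
        have hBP1 : ∑ p ∈ Finset.range (ρ 0), Bfun (cnt ρ k) p
            = -∑ s ∈ Finset.range k, (ρ s : ℤ) ^ 2 := hb1
        have hBP2 : ∑ p ∈ Finset.range (σ 0), B2fun (cnt ρ k) (cnt σ (2 * k)) (ρ 0) p
            = -∑ s ∈ Finset.range (2 * k), (σ s : ℤ) ^ 2
              + ∑ u ∈ Finset.range k, (ρ u : ℤ) * ((σ (2 * u) : ℤ) + (σ (2 * u + 1) : ℤ)) := hb2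
        rw [hBP1, hBP2, hsl1, hsl2]
        linarith [h11]⟩


variable {k : ℕ} {m : ℤ} {r1 r2 : ℕ} {hk : 1 ≤ k}

lemma fwdFun_val_1 (x : LHSty k m r1 r2) : (fwdFun k m r1 r2 x).val.1
    = cnt x.val.n1 x.val.P1 := rfl
lemma fwdFun_val_21 (x : LHSty k m r1 r2) : (fwdFun k m r1 r2 x).val.2.1
    = cnt x.val.n2 x.val.P2 := rfl
lemma fwdFun_val_221 (x : LHSty k m r1 r2) : (fwdFun k m r1 r2 x).val.2.2.1
    = fwdPtn1 x.val := rfl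
lemma fwdFun_val_222 (x : LHSty k m r1 r2) : (fwdFun k m r1 r2 x).val.2.2.2
    = fwdPtn2 x.val := rfl

lemma bwdFun_val_P1 (x : RHSty k m r1 r2) : ((bwdFun k m r1 r2 hk x).val).P1
    = x.val.1 0 := rfl
lemma bwdFun_val_P2 (x : RHSty k m r1 r2) : ((bwdFun k m r1 r2 hk x).val).P2
    = x.val.2.1 0 := rfl
lemma bwdFun_val_n1 (x : RHSty k m r1 r2) : ((bwdFun k m r1 r2 hk x).val).n1
    = cnt x.val.1 k := rfl
lemma bwdFun_val_n2 (x : RHSty k m r1 r2) : ((bwdFun k m r1 r2 hk x).val).n2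
    = cnt x.val.2.1 (2 * k) := rfl
lemma bwdFun_val_m1 (x : RHSty k m r1 r2) (p : ℕ) : ((bwdFun k m r1 r2 hk x).val).m1 p
    = (if p < x.val.1 0 then Bfun (cnt x.val.1 k) p
      - ((x.val.2.2.1 (cnt x.val.1 k p - 1)).parts.getD
          (x.val.1 (cnt x.val.1 k p - 1) - 1 - p) 0 : ℤ) else 0) := rfl
lemma bwdFun_val_m2 (x : RHSty k m r1 r2) (p : ℕ) : ((bwdFun k m r1 r2 hk x).val).m2 p
    = (if p < x.val.2.1 0 then B2fun (cnt x.val.1 k) (cnt x.val.2.1 (2 * k)) (x.val.1 0) p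
      - ((x.val.2.2.2 (cnt x.val.2.1 (2 * k) p - 1)).parts.getD
          (x.val.2.1 (cnt x.val.2.1 (2 * k) p - 1) - 1 - p) 0 : ℤ) else 0) := rfl

end Main7
section Main8
open QPAux

lemma left_inv (k : ℕ) (m : ℤ) (r1 r2 : ℕ) (hk : 1 ≤ k) :
    Function.LeftInverse (bwdFun k m r1 r2 hk) (fwdFun k m r1 r2) := by
  intro x
  obtain ⟨hA1, hA2⟩ := x.prop.1
  set d := x.val with hd
  apply Subtype.ext
  have hanti1 : ∀ i j : ℕ, i ≤ j → cnt d.n1 d.P1 j ≤ cnt d.n1 d.P1 i :=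
    fun i j h => cnt_anti d.n1 d.P1 h
  have hzero1 : ∀ s, k ≤ s → cnt d.n1 d.P1 s = 0 := fun s hs => cnt_eq_zero hA1 hs
  have hanti2 : ∀ i j : ℕ, i ≤ j → cnt d.n2 d.P2 j ≤ cnt d.n2 d.P2 i :=
    fun i j h => cnt_anti d.n2 d.P2 h
  have hzero2 : ∀ s, 2 * k ≤ s → cnt d.n2 d.P2 s = 0 := fun s hs => cnt_eq_zero hA2 hs
  have hn1 : cnt (cnt d.n1 d.P1) k = d.n1 := by
    funext p
    apply nat_eq_of_lt_iff
    intro y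
    exact Iff.trans (lt_cnt_iff hanti1 hzero1 p y) (lt_cnt1_iff d y p)
  have hn2 : cnt (cnt d.n2 d.P2) (2 * k) = d.n2 := by
    funext p
    apply nat_eq_of_lt_iff
    intro y
    exact Iff.trans (lt_cnt_iff hanti2 hzero2 p y) (lt_cnt2_iff d y p)
  apply qp_ext
  · rw [bwdFun_val_P1, fwdFun_val_1]
    exact cnt1_zero d
  · rw [bwdFun_val_P2, fwdFun_val_21]
    exact cnt2_zero d
  · rw [bwdFun_val_n1, fwdFun_val_1]
    exact hn1
  · rw [bwdFun_val_n2, fwdFun_val_21]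
    exact hn2
  · funext p
    rw [bwdFun_val_m1, fwdFun_val_1, fwdFun_val_221, hn1]
    by_cases hp : p < d.P1
    · rw [if_pos (by rw [cnt1_zero d]; exact hp)]
      have hpos := d.n1_pos p hp
      have e : d.n1 p - 1 + 1 = d.n1 p := by omega
      have hlt1 : cnt d.n1 d.P1 (d.n1 p - 1 + 1) ≤ p := by
        rw [e]
        have := lt_cnt1_iff d (d.n1 p) p
        omega
      have hlt2 : p < cnt d.n1 d.P1 (d.n1 p - 1) := by
        have := lt_cnt1_iff d (d.n1 p - 1) p
        omega
      rw [fwdPtn1_getD d hlt1 hlt2, slack1]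
      ring
    · rw [if_neg (by rw [cnt1_zero d]; exact hp)]
      exact (d.m1_zero p (by omega)).symm
  · funext p
    rw [bwdFun_val_m2, fwdFun_val_1, fwdFun_val_21, fwdFun_val_222, hn1, hn2, cnt1_zero d]
    by_cases hp : p < d.P2
    · rw [if_pos (by rw [cnt2_zero d]; exact hp)]
      have hpos := d.n2_pos p hp
      have e : d.n2 p - 1 + 1 = d.n2 p := by omega
      have hlt1 : cnt d.n2 d.P2 (d.n2 p - 1 + 1) ≤ p := by
        rw [e]
        have := lt_cnt2_iff d (d.n2 p) p
        omega
      have hlt2 : p < cnt d.n2 d.P2 (d.n2 p - 1) := by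
        have := lt_cnt2_iff d (d.n2 p - 1) p
        omega
      rw [fwdPtn2_getD d hlt1 hlt2, slack2]
      ring
    · rw [if_neg (by rw [cnt2_zero d]; exact hp)]
      exact (d.m2_zero p (by omega)).symm

end Main8
section Main9
open QPAux

lemma right_inv (k : ℕ) (m : ℤ) (r1 r2 : ℕ) (hk : 1 ≤ k) :
    Function.RightInverse (bwdFun k m r1 r2 hk) (fwdFun k m r1 r2) := by
  intro x
  obtain ⟨h1, h2, h3, h4, h5, h6, h7, h8, h9, h10, h11⟩ := x.prop
  apply Subtype.ext
  set B := (bwdFun k m r1 r2 hk x).val with hB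
  have hAB1 : ∀ p, p < B.P1 → B.n1 p ≤ k := fun p _ => cnt_le x.val.1 k p
  have hAB2 : ∀ p, p < B.P2 → B.n2 p ≤ 2 * k := fun p _ => cnt_le x.val.2.1 (2 * k) p
  have hcc1 : ∀ u, cnt B.n1 B.P1 u = x.val.1 u := by
    intro u
    rw [hB, bwdFun_val_n1, bwdFun_val_P1]
    exact cnt_cnt h1 h2 u
  have hcc2 : ∀ u, cnt B.n2 B.P2 u = x.val.2.1 u := by
    intro u
    rw [hB, bwdFun_val_n2, bwdFun_val_P2]
    exact cnt_cnt h4 h5 u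
  refine Prod.ext ?_ (Prod.ext ?_ (Prod.ext ?_ ?_))
  · rw [fwdFun_val_1]
    funext u
    exact hcc1 u
  · rw [fwdFun_val_21]
    funext u
    exact hcc2 u
  · rw [fwdFun_val_221]
    funext s
    apply ptn_ext
    by_cases hs : s < k
    · rw [fwdPtn1_parts]
      rw [← hB, hcc1, hcc1]
      set t := x.val.1 s - x.val.1 (s + 1) with ht
      have hg : ∀ j, j < t → (slack1 B (x.val.1 (s + 1) + j)).toNat
          = (x.val.2.2.1 s).parts.getD (t - 1 - j) 0 := by
        intro j hj
        have hps : x.val.1 (s + 1) + j < x.val.1 s := by omega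
        have hp0 : x.val.1 (s + 1) + j < x.val.1 0 :=
          lt_of_lt_of_le hps (h1 0 s (Nat.zero_le s))
        have hch : cnt x.val.1 k (x.val.1 (s + 1) + j) = s + 1 :=
          bwd_charge h1 h2 (by omega) hps
        rw [slack1, hB, bwdFun_val_m1, bwdFun_val_n1, if_pos hp0, hch]
        have e1 : s + 1 - 1 = s := rfl
        rw [e1]
        have e2 : x.val.1 s - 1 - (x.val.1 (s + 1) + j) = t - 1 - j := by omega
        rw [e2, sub_sub_cancel]
        simp
      rw [toList]
      have hmap : ∀ j ∈ List.range t, (slack1 B (x.val.1 (s + 1) + (t - 1 - j))).toNat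
          = (x.val.2.2.1 s).parts.getD j 0 := by
        intro j hj
        rw [List.mem_range] at hj
        rw [hg (t - 1 - j) (by omega)]
        congr 1
        omega
      rw [List.map_congr_left hmap]
      exact map_getD_filter _ t (h7 s hs) (x.val.2.2.1 s).pos
    · rw [fwdPtn1_empty B hAB1 (by omega), h8 s (by omega)]
  · rw [fwdFun_val_222]
    funext s
    apply ptn_ext
    by_cases hs : s < 2 * k
    · rw [fwdPtn2_parts]
      rw [← hB, hcc2, hcc2]
      set t := x.val.2.1 s - x.val.2.1 (s + 1) with ht
      have hg : ∀ j, j < t → (slack2 B (x.val.2.1 (s + 1) + j)).toNat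
          = (x.val.2.2.2 s).parts.getD (t - 1 - j) 0 := by
        intro j hj
        have hps : x.val.2.1 (s + 1) + j < x.val.2.1 s := by omega
        have hp0 : x.val.2.1 (s + 1) + j < x.val.2.1 0 :=
          lt_of_lt_of_le hps (h4 0 s (Nat.zero_le s))
        have hch : cnt x.val.2.1 (2 * k) (x.val.2.1 (s + 1) + j) = s + 1 :=
          bwd_charge h4 h5 (by omega) hps
        rw [slack2, hB, bwdFun_val_m2, bwdFun_val_n1, bwdFun_val_n2, bwdFun_val_P1,
          if_pos hp0, hch]
        have e1 : s + 1 - 1 = s := rfl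
        rw [e1]
        have e2 : x.val.2.1 s - 1 - (x.val.2.1 (s + 1) + j) = t - 1 - j := by omega
        rw [e2, sub_sub_cancel]
        simp
      rw [toList]
      have hmap : ∀ j ∈ List.range t, (slack2 B (x.val.2.1 (s + 1) + (t - 1 - j))).toNat
          = (x.val.2.2.2 s).parts.getD j 0 := by
        intro j hj
        rw [List.mem_range] at hj
        rw [hg (t - 1 - j) (by omega)]
        congr 1
        omega
      rw [List.map_congr_left hmap]
      exact map_getD_filter _ t (h9 s hs) (x.val.2.2.2 s).pos
    · rw [fwdPtn2_empty B hAB2 (by omega), h10 s (by omega)]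

end Main9


/-- For `k ≥ 1`, any integer `m` and nonnegative integers `r₁, r₂`,
the number of `k`-admissible quasi-particle data of color-type `(r₂, r₁)` and total
energy `m` equals the number of tuples `(ρ, σ, π, τ)` where
`ρ = (r₁⁽¹⁾ ≥ … ≥ r₁⁽ᵏ⁾ ≥ 0)` sums to `r₁`, `σ = (r₂⁽¹⁾ ≥ … ≥ r₂⁽²ᵏ⁾ ≥ 0)` sums to
`r₂` (both encoded as antitone functions `ℕ → ℕ` vanishing from index `k`, resp. `2k`,
on, with `ρ s` denoting `r₁⁽ˢ⁺¹⁾`), and `(π⁽¹⁾, …, π⁽ᵏ⁾)`, `(τ⁽¹⁾, …, τ⁽²ᵏ⁾)` are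
partitions with `ℓ(π⁽ˢ⁾) ≤ r₁⁽ˢ⁾ − r₁⁽ˢ⁺¹⁾`, `ℓ(τ⁽ˢ⁾) ≤ r₂⁽ˢ⁾ − r₂⁽ˢ⁺¹⁾` and
`Σ_s |π⁽ˢ⁾| + Σ_s |τ⁽ˢ⁾| = m − E(ρ,σ)`, where
`E(ρ,σ) = Σ_{s=1}^{k} (r₁⁽ˢ⁾)² + Σ_{s=1}^{2k} (r₂⁽ˢ⁾)²
  − Σ_{s=1}^{k} r₁⁽ˢ⁾ (r₂⁽²ˢ⁻¹⁾ + r₂⁽²ˢ⁾)`.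
(Counting such tuples realizes the sum over all pairs `(ρ, σ)` of the number of
corresponding tuples of partitions.) -/
theorem card_admissible_qpdata_eq_fermionic_count
    (k : ℕ) (hk : 1 ≤ k) (m : ℤ) (r1 r2 : ℕ) :
    Nat.card {d : QPData // d.Admissible k ∧ d.colorType = (r2, r1) ∧ d.energy = m}
      = Nat.card {x : (ℕ → ℕ) × (ℕ → ℕ) × (ℕ → Ptn) × (ℕ → Ptn) //
          (∀ i j, i ≤ j → x.1 j ≤ x.1 i) ∧ (∀ s, k ≤ s → x.1 s = 0) ∧
          (∑ s ∈ Finset.range k, x.1 s = r1) ∧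
          (∀ i j, i ≤ j → x.2.1 j ≤ x.2.1 i) ∧ (∀ s, 2 * k ≤ s → x.2.1 s = 0) ∧
          (∑ s ∈ Finset.range (2 * k), x.2.1 s = r2) ∧
          (∀ s, s < k → (x.2.2.1 s).length ≤ x.1 s - x.1 (s + 1)) ∧
          (∀ s, k ≤ s → (x.2.2.1 s).parts = []) ∧
          (∀ s, s < 2 * k → (x.2.2.2 s).length ≤ x.2.1 s - x.2.1 (s + 1)) ∧
          (∀ s, 2 * k ≤ s → (x.2.2.2 s).parts = []) ∧
          ((∑ s ∈ Finset.range k, ((x.2.2.1 s).size : ℤ))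
              + ∑ s ∈ Finset.range (2 * k), ((x.2.2.2 s).size : ℤ)
            = m - ((∑ s ∈ Finset.range k, (x.1 s : ℤ) ^ 2)
                + (∑ s ∈ Finset.range (2 * k), (x.2.1 s : ℤ) ^ 2)
                - ∑ s ∈ Finset.range k,
                    (x.1 s : ℤ) * ((x.2.1 (2 * s) : ℤ) + (x.2.1 (2 * s + 1) : ℤ))))} := by
  exact Nat.card_congr
    ⟨fwdFun k m r1 r2, bwdFun k m r1 r2 hk, left_inv k m r1 r2 hk, right_inv k m r1 r2 hk⟩
end

section
/- For every integer m and all nonnegative integers r₁, r₂, the number of quasi-particle data (with no bound on the charges) of color-type (r₂, r₁) and total energy m is equal to the sum, over all pairs (ρ, σ) where ρ = (r₁⁽ˢ⁾)_{s≥1} is a weakly decreasing eventually-zero sequence of nonnegative integers with Σ_{s≥1} r₁⁽ˢ⁾ = r₁ and σ = (r₂⁽ˢ⁾)_{s≥1} is a weakly decreasing eventually-zero sequence of nonnegative integers with Σ_{s≥1} r₂⁽ˢ⁾ = r₂, of the number of families of partitions (π⁽ˢ⁾)_{s≥1}, (τ⁽ˢ⁾)_{s≥1}, all but finitely many empty,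 with ℓ(π⁽ˢ⁾) ≤ r₁⁽ˢ⁾ − r₁⁽ˢ⁺¹⁾ and ℓ(τ⁽ˢ⁾) ≤ r₂⁽ˢ⁾ − r₂⁽ˢ⁺¹⁾ for all s ≥ 1, and Σ_{s≥1} |π⁽ˢ⁾| + Σ_{s≥1} |τ⁽ˢ⁾| = m − E(ρ,σ), where E(ρ,σ) = Σ_{s≥1} (r₁⁽ˢ⁾)² + Σ_{s≥1} (r₂⁽ˢ⁾)² − Σ_{s≥1} r₁⁽ˢ⁾·(r₂⁽²ˢ⁻¹⁾ + r₂⁽²ˢ⁾). -/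
namespace QPB
open Finset


/-- A downward-closed bounded predicate's filter is an initial segment. -/
lemma downward_iff {P : ℕ} (Q : ℕ → Prop) [DecidablePred Q]
    (hdc : ∀ p q, p ≤ q → Q q → Q p) (hb : ∀ p, Q p → p < P) (p : ℕ) :
    Q p ↔ p < ((Finset.range P).filter Q).card := by
  set S := (Finset.range P).filter Q with hS
  have hsub : Finset.range S.card ⊆ S := by
    intro p hp
    rw [Finset.mem_range] at hp
    by_contra hpS
    have hall : ∀ q ∈ S, q < p := by
      intro q hq
      rw [hS, Finset.mem_filter, Finset.mem_range] at hq
      by_contra hqp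
      exact hpS (by rw [hS, Finset.mem_filter, Finset.mem_range]
                    exact ⟨hb p (hdc p q (by omega) hq.2), hdc p q (by omega) hq.2⟩)
    have : S ⊆ Finset.range p := fun q hq => Finset.mem_range.2 (hall q hq)
    have := Finset.card_le_card this
    simp at this; omega
  have hEq : Finset.range S.card = S :=
    Finset.eq_of_subset_of_card_le hsub (by simp)
  constructor
  · intro hQ
    have : p ∈ S := by rw [hS, Finset.mem_filter, Finset.mem_range]; exact ⟨hb p hQ, hQ⟩
    rw [← hEq, Finset.mem_range] at this; exact this
  · intro hp
    have : p ∈ S := by rw [← hEq, Finset.mem_range]; exact hp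
    rw [hS, Finset.mem_filter] at this; exact this.2

/-- conjugate counting function -/
def nconj (P : ℕ) (n : ℕ → ℕ) (s : ℕ) : ℕ :=
  ((Finset.range P).filter (fun p => s < n p)).card

lemma conj_iff {P : ℕ} {n : ℕ → ℕ}
    (hanti : ∀ p q, p ≤ q → q < P → n q ≤ n p) (hzero : ∀ p, P ≤ p → n p = 0)
    (s p : ℕ) : s < n p ↔ p < nconj P n s := by
  unfold nconj
  refine downward_iff (P := P) (fun p => s < n p) ?_ ?_ p
  · intro p q hpq hq
    rcases lt_or_ge q P with h | h
    · exact lt_of_lt_of_le hq (hanti p q hpq h)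
    · rw [hzero q h] at hq; omega
  · intro p hp
    by_contra h
    rw [hzero p (by omega)] at hp; omega

lemma nconj_anti (P : ℕ) (n : ℕ → ℕ) {s t : ℕ} (hst : s ≤ t) :
    nconj P n t ≤ nconj P n s := by
  apply Finset.card_le_card
  intro p hp
  simp only [Finset.mem_filter, Finset.mem_range] at *
  omega

lemma nconj_le (P : ℕ) (n : ℕ → ℕ) (s : ℕ) : nconj P n s ≤ P := by
  calc ((Finset.range P).filter _).card ≤ (Finset.range P).card := Finset.card_filter_le _ _
  _ = P := Finset.card_range P

lemma nconj_eq_zero (P : ℕ) (n : ℕ → ℕ) {N s : ℕ} (hn : ∀ p, p < P → n p ≤ N)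
    (hs : N ≤ s) : nconj P n s = 0 := by
  rw [nconj, Finset.card_eq_zero, Finset.filter_eq_empty_iff]
  intro p hp
  rw [Finset.mem_range] at hp
  have := hn p hp; omega

lemma nconj_sum {P N : ℕ} {n : ℕ → ℕ} (hn : ∀ p, p < P → n p ≤ N) :
    ∑ s ∈ Finset.range N, nconj P n s = ∑ p ∈ Finset.range P, n p := by
  unfold nconj
  simp only [Finset.card_filter]
  rw [Finset.sum_comm]
  apply Finset.sum_congr rfl
  intro p hp
  rw [Finset.mem_range] at hp
  have h1 : (Finset.range N).filter (fun s => s < n p) = Finset.range (n p) := by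
    ext s
    simp only [Finset.mem_filter, Finset.mem_range]
    have := hn p hp; omega
  calc ∑ s ∈ Finset.range N, (if s < n p then 1 else 0)
      = ((Finset.range N).filter (fun s => s < n p)).card := (Finset.card_filter _ _).symm
    _ = n p := by rw [h1, Finset.card_range]




/-- symmetric double sum = diagonal + twice lower triangle -/
lemma diag_sum (g : ℕ → ℕ → ℕ) (hg : ∀ a b, g a b = g b a) (P : ℕ) :
    ∑ p ∈ Finset.range P, ∑ p' ∈ Finset.range P, g p p'
      = ∑ p ∈ Finset.range P, (g p p + 2 * ∑ p' ∈ Finset.range p, g p p') := by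
  induction P with
  | zero => simp
  | succ P ih =>
    rw [Finset.sum_range_succ]
    conv_lhs => rw [Finset.sum_range_succ]
    have h1 : ∑ p ∈ Finset.range P, ∑ p' ∈ Finset.range (P+1), g p p'
        = (∑ p ∈ Finset.range P, ∑ p' ∈ Finset.range P, g p p')
          + ∑ p ∈ Finset.range P, g p P := by
      rw [← Finset.sum_add_distrib]
      apply Finset.sum_congr rfl
      intro p _; rw [Finset.sum_range_succ]
    rw [h1, Finset.sum_range_succ, ih]
    have h2 : ∑ p ∈ Finset.range P, g p P = ∑ p' ∈ Finset.range P, g P p' := by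
      apply Finset.sum_congr rfl; intro p _; exact hg p P
    rw [h2]; ring
  




lemma min_eq_sum_ite {a N : ℕ} (b : ℕ) (ha : a ≤ N) :
    (min a b) = ∑ s ∈ Finset.range N, (if s < a ∧ s < b then 1 else 0) := by
  have h1 : (Finset.range N).filter (fun s => s < a ∧ s < b) = Finset.range (min a b) := by
    ext s
    simp only [Finset.mem_filter, Finset.mem_range, lt_min_iff]
    omega
  calc min a b = ((Finset.range N).filter (fun s => s < a ∧ s < b)).card := by
        rw [h1, Finset.card_range]
    _ = _ := Finset.card_filter _ _

lemma count_lt {P : ℕ} {n ρ : ℕ → ℕ} {s : ℕ} (hir : ∀ p, (s < n p ↔ p < ρ s))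
    (hρ : ρ s ≤ P) : ∑ p ∈ Finset.range P, (if s < n p then 1 else 0) = ρ s := by
  rw [← Finset.card_filter]
  have : (Finset.range P).filter (fun p => s < n p) = Finset.range (ρ s) := by
    ext p
    simp only [Finset.mem_filter, Finset.mem_range, hir p]
    omega
  rw [this, Finset.card_range]

lemma double_min_sum {P N : ℕ} {n ρ : ℕ → ℕ} (hir : ∀ s p, (s < n p ↔ p < ρ s))
    (hnN : ∀ p, n p ≤ N) (hρ : ∀ s, ρ s ≤ P) :
    ∑ p ∈ Finset.range P, ∑ p' ∈ Finset.range P, min (n p) (n p')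
      = ∑ s ∈ Finset.range N, ρ s * ρ s := by
  have step : ∀ p ∈ Finset.range P, ∀ p' ∈ Finset.range P,
      min (n p) (n p') = ∑ s ∈ Finset.range N,
        (if s < n p then 1 else 0) * (if s < n p' then 1 else 0) := by
    intro p _ p' _
    rw [min_eq_sum_ite (n p') (hnN p)]
    apply Finset.sum_congr rfl
    intro s _
    by_cases h1 : s < n p <;> by_cases h2 : s < n p' <;> simp [h1, h2]
  calc ∑ p ∈ Finset.range P, ∑ p' ∈ Finset.range P, min (n p) (n p')
      = ∑ p ∈ Finset.range P, ∑ p' ∈ Finset.range P, ∑ s ∈ Finset.range N,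
          (if s < n p then 1 else 0) * (if s < n p' then 1 else 0) := by
        apply Finset.sum_congr rfl; intro p hp
        apply Finset.sum_congr rfl; intro p' hp'
        exact step p hp p' hp'
    _ = ∑ s ∈ Finset.range N, ∑ p ∈ Finset.range P, ∑ p' ∈ Finset.range P,
          (if s < n p then 1 else 0) * (if s < n p' then 1 else 0) := by
        conv_lhs => enter [2, p]; rw [Finset.sum_comm]
        rw [Finset.sum_comm]
    _ = ∑ s ∈ Finset.range N, ρ s * ρ s := by
        apply Finset.sum_congr rfl; intro s _
        rw [← Finset.sum_mul_sum]
        rw [count_lt (hir s) (hρ s)]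

lemma pair_sum {M : Type*} [AddCommMonoid M] (f : ℕ → M) (N : ℕ) :
    ∑ t ∈ Finset.range (2 * N), f t = ∑ s ∈ Finset.range N, (f (2 * s) + f (2 * s + 1)) := by
  induction N with
  | zero => simp
  | succ N ih =>
    have : 2 * (N + 1) = (2 * N + 1) + 1 := by ring
    rw [this, Finset.sum_range_succ, Finset.sum_range_succ, ih, Finset.sum_range_succ]
    rw [add_assoc]

lemma cross_min_sum {P1 P2 N : ℕ} {n1 ρ n2 σ : ℕ → ℕ}
    (hir1 : ∀ s p, (s < n1 p ↔ p < ρ s)) (hir2 : ∀ s p, (s < n2 p ↔ p < σ s))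
    (hn1N : ∀ p, n1 p ≤ N) (hn2N : ∀ p, n2 p ≤ 2 * N)
    (hρ : ∀ s, ρ s ≤ P1) (hσ : ∀ s, σ s ≤ P2) :
    ∑ p ∈ Finset.range P2, ∑ q ∈ Finset.range P1, min (2 * n1 q) (n2 p)
      = ∑ s ∈ Finset.range N, ρ s * (σ (2 * s) + σ (2 * s + 1)) := by
  have key : ∀ t, ∑ q ∈ Finset.range P1, (if t < 2 * n1 q then 1 else 0) = ρ (t / 2) := by
    intro t
    have : ∀ q, (t < 2 * n1 q) ↔ (t / 2 < n1 q) := by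
      intro q; rw [Nat.div_lt_iff_lt_mul (by norm_num : 0 < 2)]; omega
    calc ∑ q ∈ Finset.range P1, (if t < 2 * n1 q then 1 else 0)
        = ∑ q ∈ Finset.range P1, (if t / 2 < n1 q then 1 else 0) := by
          apply Finset.sum_congr rfl; intro q _; simp only [this q]
      _ = ρ (t / 2) := count_lt (fun p => hir1 (t/2) p) (hρ _)
  calc ∑ p ∈ Finset.range P2, ∑ q ∈ Finset.range P1, min (2 * n1 q) (n2 p)
      = ∑ p ∈ Finset.range P2, ∑ q ∈ Finset.range P1, ∑ t ∈ Finset.range (2 * N),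
          (if t < 2 * n1 q then 1 else 0) * (if t < n2 p then 1 else 0) := by
        apply Finset.sum_congr rfl; intro p _
        apply Finset.sum_congr rfl; intro q _
        rw [min_eq_sum_ite (N := 2 * N) (n2 p) (by have := hn1N q; omega)]
        apply Finset.sum_congr rfl; intro t _
        by_cases h1 : t < 2 * n1 q <;> by_cases h2 : t < n2 p <;> simp [h1, h2]
    _ = ∑ t ∈ Finset.range (2 * N), (∑ q ∈ Finset.range P1,
          (if t < 2 * n1 q then 1 else 0)) * (∑ p ∈ Finset.range P2, (if t < n2 p then 1 else 0)) := by
        conv_lhs => enter [2, p]; rw [Finset.sum_comm]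
        rw [Finset.sum_comm]
        apply Finset.sum_congr rfl; intro t _
        rw [Finset.sum_comm, ← Finset.sum_mul_sum]
    _ = ∑ t ∈ Finset.range (2 * N), ρ (t / 2) * σ t := by
        apply Finset.sum_congr rfl; intro t _
        rw [key t, count_lt (fun p => hir2 t p) (hσ _)]
    _ = ∑ s ∈ Finset.range N, ρ s * (σ (2 * s) + σ (2 * s + 1)) := by
        rw [pair_sum]
        apply Finset.sum_congr rfl; intro s _
        have h1 : 2 * s / 2 = s := by omega
        have h2 : (2 * s + 1) / 2 = s := by omega
        rw [h1, h2, Nat.mul_add]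




lemma sum_blocks {M : Type*} [AddCommMonoid M] (f : ℕ → M) (ρ : ℕ → ℕ)
    (hanti : ∀ s t, s ≤ t → ρ t ≤ ρ s) (N : ℕ) (hN : ρ N = 0) :
    ∑ p ∈ Finset.range (ρ 0), f p
      = ∑ s ∈ Finset.range N, ∑ p ∈ Finset.Ico (ρ (s + 1)) (ρ s), f p := by
  have key : ∀ n : ℕ, ∑ p ∈ Finset.range (ρ 0), f p
      = (∑ s ∈ Finset.range n, ∑ p ∈ Finset.Ico (ρ (s + 1)) (ρ s), f p)
        + ∑ p ∈ Finset.range (ρ n), f p := by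
    intro n
    induction n with
    | zero => simp
    | succ n ih =>
      rw [ih, Finset.sum_range_succ, add_assoc]
      congr 1
      rw [add_comm]
      have h0 : ρ (n + 1) ≤ ρ n := hanti n (n + 1) (by omega)
      rw [Finset.range_eq_Ico, Finset.range_eq_Ico]
      exact (Finset.sum_Ico_consecutive f (Nat.zero_le _) h0).symm
  rw [key N, hN]; simp

/-- getD is antitone for sorted lists of naturals. -/
lemma getD_anti {l : List ℕ} (h : l.Pairwise (· ≥ ·)) {i j : ℕ} (hij : i ≤ j) :
    l.getD j 0 ≤ l.getD i 0 := by
  rcases lt_or_ge j l.length with hj | hj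
  · have hi : i < l.length := lt_of_le_of_lt hij hj
    rw [List.getD_eq_getElem l 0 hj, List.getD_eq_getElem l 0 hi]
    rcases eq_or_lt_of_le hij with rfl | hlt
    · exact le_refl _
    · exact (List.pairwise_iff_getElem.mp h) i j hi hj hlt
  · rw [List.getD_eq_default l 0 hj]; omega

lemma all_zero_eq_replicate {l : List ℕ} (h : ∀ x ∈ l, x = 0) :
    l = List.replicate l.length 0 :=
  List.eq_replicate_iff.mpr ⟨rfl, h⟩

/-- A sorted list of naturals is its positive part followed by zeros. -/
lemma sorted_eq_filter_append {l : List ℕ} (h : l.Pairwise (· ≥ ·)) :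
    l = l.filter (fun a => 0 < a)
        ++ List.replicate (l.length - (l.filter (fun a => 0 < a)).length) 0 := by
  induction l with
  | nil => simp
  | cons a t ih =>
    rcases Nat.eq_zero_or_pos a with rfl | ha
    · have hz : ∀ x ∈ (0 :: t : List ℕ), x = 0 := by
        intro x hx
        rcases List.mem_cons.mp hx with rfl | hx
        · rfl
        · have := (List.pairwise_cons.mp h).1 x hx
          omega
      have hfilt : (0 :: t : List ℕ).filter (fun a => 0 < a) = [] := by
        rw [List.filter_eq_nil_iff]
        intro x hx
        have := hz x hx
        simp [this]
      rw [hfilt]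
      simpa using all_zero_eq_replicate hz
    · have hf : (a :: t).filter (fun a => 0 < a) = a :: t.filter (fun a => 0 < a) := by
        simp [List.filter_cons, ha]
      rw [hf]
      have ht := ih (List.Pairwise.of_cons h)
      simp only [List.length_cons, List.cons_append]
      have hlen : (t.filter (fun a => 0 < a)).length ≤ t.length := List.length_filter_le _ _
      have harith : t.length + 1 - ((t.filter (fun a => 0 < a)).length + 1)
          = t.length - (t.filter (fun a => 0 < a)).length := by omega
      rw [harith]
      exact congrArg (a :: ·) ht





lemma map_range_getD (l : List ℕ) (L : ℕ) (h : l.length ≤ L) :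
    (List.range L).map (fun j => l.getD j 0) = l ++ List.replicate (L - l.length) 0 := by
  apply List.ext_getElem
  · simp; omega
  · intro i h1 h2
    simp only [List.getElem_map, List.getElem_range]
    rcases lt_or_ge i l.length with hi | hi
    · rw [List.getD_eq_getElem l 0 hi, List.getElem_append_left hi]
    · rw [List.getD_eq_default l 0 hi, List.getElem_append_right hi,
        List.getElem_replicate]

lemma sorted_map_range {f : ℕ → ℕ} {L : ℕ} (h : ∀ i j, i ≤ j → j < L → f j ≤ f i) :
    ((List.range L).map f).Pairwise (· ≥ ·) := by
  rw [List.pairwise_iff_getElem]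
  intro i j hi hj hij
  simp only [List.getElem_map, List.getElem_range]
  simp only [List.length_map, List.length_range] at hi hj
  exact h i j (by omega) hj

lemma filter_append_replicate_zero (l : List ℕ) (k : ℕ) (h : ∀ x ∈ l, 0 < x) :
    (l ++ List.replicate k 0).filter (fun a => 0 < a) = l := by
  rw [List.filter_append]
  have h1 : l.filter (fun a => 0 < a) = l := by
    rw [List.filter_eq_self]
    intro a ha; simpa using h a ha
  have h2 : (List.replicate k (0:ℕ)).filter (fun a => 0 < a) = [] := by
    rw [List.filter_eq_nil_iff]
    intro a ha
    rw [List.eq_of_mem_replicate ha]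
    simp
  rw [h1, h2, List.append_nil]

lemma sum_range_getD (l : List ℕ) (L : ℕ) (h : l.length ≤ L) :
    ∑ j ∈ Finset.range L, l.getD j 0 = l.sum := by
  induction L generalizing l with
  | zero =>
    interval_cases hl : l.length
    · rw [List.length_eq_zero_iff] at hl; simp [hl]
  | succ L ih =>
    cases l with
    | nil => simp
    | cons a t =>
      rw [Finset.sum_range_succ']
      simp only [List.getD_cons_succ, List.getD_cons_zero]
      rw [ih t (by simpa using h), List.sum_cons, add_comm]

lemma list_sum_map_range {M : Type*} [AddCommMonoid M] (f : ℕ → M) (L : ℕ) :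
    ((List.range L).map f).sum = ∑ j ∈ Finset.range L, f j := by
  induction L with
  | zero => simp
  | succ L ih => rw [List.range_succ, List.map_append, List.sum_append, Finset.sum_range_succ, ih]; simp



end QPB

namespace QPB
open Finset

def bndA (n : ℕ → ℕ) (p : ℕ) : ℤ :=
  -(n p : ℤ) - 2 * ∑ p' ∈ Finset.range p, (min (n p) (n p') : ℤ)

def bndB (P1 : ℕ) (n1 n2 : ℕ → ℕ) (p : ℕ) : ℤ :=
  -(n2 p : ℤ) + ∑ q ∈ Finset.range P1, (min (2 * n1 q) (n2 p) : ℤ)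
    - 2 * ∑ p' ∈ Finset.range p, (min (n2 p) (n2 p') : ℤ)

def xf1 (d : QPData) (p : ℕ) : ℕ := (bndA d.n1 p - d.m1 p).toNat
def xf2 (d : QPData) (p : ℕ) : ℕ := (bndB d.P1 d.n1 d.n2 p - d.m2 p).toNat
def rho (d : QPData) (s : ℕ) : ℕ := nconj d.P1 d.n1 s
def sig (d : QPData) (s : ℕ) : ℕ := nconj d.P2 d.n2 s

lemma hir1 (d : QPData) : ∀ s p, s < d.n1 p ↔ p < rho d s :=
  fun s p => conj_iff d.n1_anti d.n1_zero s p

lemma hir2 (d : QPData) : ∀ s p, s < d.n2 p ↔ p < sig d s :=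
  fun s p => conj_iff d.n2_anti d.n2_zero s p

lemma rho_zero (d : QPData) : rho d 0 = d.P1 := by
  rw [rho, nconj]
  rw [Finset.filter_true_of_mem]
  · exact Finset.card_range _
  · intro p hp
    exact d.n1_pos p (Finset.mem_range.mp hp)

lemma sig_zero (d : QPData) : sig d 0 = d.P2 := by
  rw [sig, nconj]
  rw [Finset.filter_true_of_mem]
  · exact Finset.card_range _
  · intro p hp
    exact d.n2_pos p (Finset.mem_range.mp hp)

lemma rho_le (d : QPData) (s : ℕ) : rho d s ≤ d.P1 := nconj_le _ _ _
lemma sig_le (d : QPData) (s : ℕ) : sig d s ≤ d.P2 := nconj_le _ _ _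
lemma rho_anti (d : QPData) {s t : ℕ} (h : s ≤ t) : rho d t ≤ rho d s := nconj_anti _ _ h
lemma sig_anti (d : QPData) {s t : ℕ} (h : s ≤ t) : sig d t ≤ sig d s := nconj_anti _ _ h

lemma n1_le (d : QPData) (p : ℕ) : d.n1 p ≤ d.n1 0 := by
  rcases lt_or_ge p d.P1 with h | h
  · exact d.n1_anti 0 p (Nat.zero_le p) h
  · rw [d.n1_zero p h]; omega

lemma n2_le (d : QPData) (p : ℕ) : d.n2 p ≤ d.n2 0 := by
  rcases lt_or_ge p d.P2 with h | h
  · exact d.n2_anti 0 p (Nat.zero_le p) h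
  · rw [d.n2_zero p h]; omega

lemma rho_vanish (d : QPData) {s : ℕ} (h : d.n1 0 ≤ s) : rho d s = 0 :=
  nconj_eq_zero _ _ (fun p _ => n1_le d p) h

lemma sig_vanish (d : QPData) {s : ℕ} (h : d.n2 0 ≤ s) : sig d s = 0 :=
  nconj_eq_zero _ _ (fun p _ => n2_le d p) h

/-- block characterization -/
lemma block1_iff (d : QPData) (s p : ℕ) :
    d.n1 p = s + 1 ↔ (rho d (s + 1) ≤ p ∧ p < rho d s) := by
  have h1 := hir1 d s p
  have h2 := hir1 d (s + 1) p
  omega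

lemma block2_iff (d : QPData) (s p : ℕ) :
    d.n2 p = s + 1 ↔ (sig d (s + 1) ≤ p ∧ p < sig d s) := by
  have h1 := hir2 d s p
  have h2 := hir2 d (s + 1) p
  omega

lemma bndA_succ (n : ℕ → ℕ) (q : ℕ) (h : n (q + 1) = n q) :
    bndA n (q + 1) = bndA n q - 2 * (n q : ℤ) := by
  rw [bndA, bndA, Finset.sum_range_succ, h, min_self]
  ring

lemma bndB_succ (P1 : ℕ) (n1 n2 : ℕ → ℕ) (q : ℕ) (h : n2 (q + 1) = n2 q) :
    bndB P1 n1 n2 (q + 1) = bndB P1 n1 n2 q - 2 * (n2 q : ℤ) := by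
  rw [bndB, bndB, Finset.sum_range_succ, h, min_self]
  ring

lemma xf1_mono (d : QPData) {s p q : ℕ} (hp : rho d (s + 1) ≤ p) (hpq : p ≤ q)
    (hq : q < rho d s) : xf1 d p ≤ xf1 d q := by
  induction q, hpq using Nat.le_induction with
  | base => exact le_refl _
  | succ q hpq ih =>
    have hq' : q < rho d s := by omega
    have h1 : d.n1 q = s + 1 := (block1_iff d s q).mpr ⟨by omega, hq'⟩
    have h2 : d.n1 (q + 1) = s + 1 := (block1_iff d s (q + 1)).mpr ⟨by omega, hq⟩
    have hP : q + 1 < d.P1 := lt_of_lt_of_le hq (rho_le d s)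
    have hD2 := d.D2 q hP (by omega)
    have hb := bndA_succ d.n1 q (by omega)
    refine le_trans (ih hq') ?_
    rw [xf1, xf1]
    apply Int.toNat_le_toNat
    rw [hb]
    omega

lemma xf2_mono (d : QPData) {s p q : ℕ} (hp : sig d (s + 1) ≤ p) (hpq : p ≤ q)
    (hq : q < sig d s) : xf2 d p ≤ xf2 d q := by
  induction q, hpq using Nat.le_induction with
  | base => exact le_refl _
  | succ q hpq ih =>
    have hq' : q < sig d s := by omega
    have h1 : d.n2 q = s + 1 := (block2_iff d s q).mpr ⟨by omega, hq'⟩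
    have h2 : d.n2 (q + 1) = s + 1 := (block2_iff d s (q + 1)).mpr ⟨by omega, hq⟩
    have hP : q + 1 < d.P2 := lt_of_lt_of_le hq (sig_le d s)
    have hD4 := d.D4 q hP (by omega)
    have hb := bndB_succ d.P1 d.n1 d.n2 q (by omega)
    refine le_trans (ih hq') ?_
    rw [xf2, xf2]
    apply Int.toNat_le_toNat
    rw [hb]
    omega

def blockList (x ρ : ℕ → ℕ) (s : ℕ) : List ℕ :=
  (List.range (ρ s - ρ (s + 1))).map (fun j => x (ρ s - 1 - j))

lemma blockList_sorted1 (d : QPData) (s : ℕ) :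
    (blockList (xf1 d) (rho d) s).Pairwise (· ≥ ·) := by
  apply sorted_map_range
  intro i j hij hj
  exact xf1_mono d (s := s) (by omega) (by omega) (by omega)

lemma blockList_sorted2 (d : QPData) (s : ℕ) :
    (blockList (xf2 d) (sig d) s).Pairwise (· ≥ ·) := by
  apply sorted_map_range
  intro i j hij hj
  exact xf2_mono d (s := s) (by omega) (by omega) (by omega)

def toPtn (l : List ℕ) (h : l.Pairwise (· ≥ ·)) : Ptn where
  parts := l.filter (fun a => 0 < a)
  sorted := h.filter _
  pos := by
    intro x hx
    simpa using (List.of_mem_filter hx)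

lemma Ptn.ext' {p q : Ptn} (h : p.parts = q.parts) : p = q := by
  cases p; cases q; simp_all

noncomputable def phi (d : QPData) : (ℕ → ℕ) × (ℕ → ℕ) × (ℕ → Ptn) × (ℕ → Ptn) :=
  ⟨rho d, sig d,
   fun s => toPtn _ (blockList_sorted1 d s),
   fun s => toPtn _ (blockList_sorted2 d s)⟩

end QPB

namespace QPB
open Finset

lemma getD_filter_zero {l : List ℕ} (h : l.Pairwise (· ≥ ·)) (j : ℕ) :
    (l.filter (fun a => 0 < a)).getD j 0 = l.getD j 0 := by
  set f := l.filter (fun a => 0 < a) with hf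
  have key : l.getD j 0 = (f ++ List.replicate (l.length - f.length) 0).getD j 0 :=
    congrArg (fun t : List ℕ => t.getD j 0) (sorted_eq_filter_append h)
  rw [key]
  rcases lt_or_ge j f.length with hj | hj
  · rw [List.getD_append _ _ _ _ hj]
  · rw [List.getD_append_right _ _ _ _ hj, List.getD_eq_default f 0 hj]
    simp only [List.getD_eq_getElem?_getD, List.getElem?_getD_replicate_default_eq]
end QPB

namespace QPB
open Finset

lemma x1_eq_getD (d : QPData) {s p : ℕ} (hp1 : rho d (s + 1) ≤ p) (hp2 : p < rho d s) :
    xf1 d p = ((phi d).2.2.1 s).parts.getD (rho d s - 1 - p) 0 := by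
  show xf1 d p = ((blockList (xf1 d) (rho d) s).filter (fun a => 0 < a)).getD _ 0
  rw [getD_filter_zero (blockList_sorted1 d s)]
  have hlen : (blockList (xf1 d) (rho d) s).length = rho d s - rho d (s + 1) := by
    rw [blockList, List.length_map, List.length_range]
  have hj : rho d s - 1 - p < (blockList (xf1 d) (rho d) s).length := by rw [hlen]; omega
  rw [List.getD_eq_getElem _ 0 hj]
  simp only [blockList, List.getElem_map, List.getElem_range]
  congr 1
  omega

lemma x2_eq_getD (d : QPData) {s p : ℕ} (hp1 : sig d (s + 1) ≤ p) (hp2 : p < sig d s) :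
    xf2 d p = ((phi d).2.2.2 s).parts.getD (sig d s - 1 - p) 0 := by
  show xf2 d p = ((blockList (xf2 d) (sig d) s).filter (fun a => 0 < a)).getD _ 0
  rw [getD_filter_zero (blockList_sorted2 d s)]
  have hlen : (blockList (xf2 d) (sig d) s).length = sig d s - sig d (s + 1) := by
    rw [blockList, List.length_map, List.length_range]
  have hj : sig d s - 1 - p < (blockList (xf2 d) (sig d) s).length := by rw [hlen]; omega
  rw [List.getD_eq_getElem _ 0 hj]
  simp only [blockList, List.getElem_map, List.getElem_range]
  congr 1
  omega

lemma block_sum (x : ℕ → ℕ) (ρ : ℕ → ℕ) (s : ℕ) :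
    ∑ p ∈ Finset.Ico (ρ (s + 1)) (ρ s), x p
      = ∑ j ∈ Finset.range (ρ s - ρ (s + 1)), x (ρ s - 1 - j) := by
  rw [Finset.sum_Ico_eq_sum_range]
  rw [← Finset.sum_range_reflect (fun j => x (ρ s - 1 - j)) _]
  apply Finset.sum_congr rfl
  intro j hj
  rw [Finset.mem_range] at hj
  congr 1
  omega

lemma parts_len_le1 (d : QPData) (s : ℕ) :
    ((phi d).2.2.1 s).parts.length ≤ rho d s - rho d (s + 1) := by
  show ((blockList (xf1 d) (rho d) s).filter _).length ≤ _
  calc ((blockList (xf1 d) (rho d) s).filter _).length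
      ≤ (blockList (xf1 d) (rho d) s).length := List.length_filter_le _ _
    _ = rho d s - rho d (s + 1) := by rw [blockList, List.length_map, List.length_range]

lemma parts_len_le2 (d : QPData) (s : ℕ) :
    ((phi d).2.2.2 s).parts.length ≤ sig d s - sig d (s + 1) := by
  show ((blockList (xf2 d) (sig d) s).filter _).length ≤ _
  calc ((blockList (xf2 d) (sig d) s).filter _).length
      ≤ (blockList (xf2 d) (sig d) s).length := List.length_filter_le _ _
    _ = sig d s - sig d (s + 1) := by rw [blockList, List.length_map, List.length_range]

lemma xsum_eq_sizes1 (d : QPData) (N : ℕ) (hN : rho d N = 0) :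
    ∑ p ∈ Finset.range d.P1, xf1 d p = ∑ s ∈ Finset.range N, ((phi d).2.2.1 s).size := by
  rw [← rho_zero d, sum_blocks (xf1 d) (rho d) (fun s t h => rho_anti d h) N hN]
  apply Finset.sum_congr rfl
  intro s _
  rw [block_sum]
  have hL : ((phi d).2.2.1 s).parts.length ≤ rho d s - rho d (s + 1) := parts_len_le1 d s
  calc ∑ j ∈ Finset.range (rho d s - rho d (s + 1)), xf1 d (rho d s - 1 - j)
      = ∑ j ∈ Finset.range (rho d s - rho d (s + 1)), ((phi d).2.2.1 s).parts.getD j 0 := by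
        apply Finset.sum_congr rfl
        intro j hj
        rw [Finset.mem_range] at hj
        rw [x1_eq_getD d (s := s) (p := rho d s - 1 - j) (by omega) (by omega)]
        congr 1
        omega
    _ = ((phi d).2.2.1 s).parts.sum := sum_range_getD _ _ hL
    _ = ((phi d).2.2.1 s).size := rfl

lemma xsum_eq_sizes2 (d : QPData) (N : ℕ) (hN : sig d N = 0) :
    ∑ p ∈ Finset.range d.P2, xf2 d p = ∑ s ∈ Finset.range N, ((phi d).2.2.2 s).size := by
  rw [← sig_zero d, sum_blocks (xf2 d) (sig d) (fun s t h => sig_anti d h) N hN]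
  apply Finset.sum_congr rfl
  intro s _
  rw [block_sum]
  have hL : ((phi d).2.2.2 s).parts.length ≤ sig d s - sig d (s + 1) := parts_len_le2 d s
  calc ∑ j ∈ Finset.range (sig d s - sig d (s + 1)), xf2 d (sig d s - 1 - j)
      = ∑ j ∈ Finset.range (sig d s - sig d (s + 1)), ((phi d).2.2.2 s).parts.getD j 0 := by
        apply Finset.sum_congr rfl
        intro j hj
        rw [Finset.mem_range] at hj
        rw [x2_eq_getD d (s := s) (p := sig d s - 1 - j) (by omega) (by omega)]
        congr 1
        omega
    _ = ((phi d).2.2.2 s).parts.sum := sum_range_getD _ _ hL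
    _ = ((phi d).2.2.2 s).size := rfl

lemma m1_eq (d : QPData) {p : ℕ} (hp : p < d.P1) :
    d.m1 p = bndA d.n1 p - (xf1 d p : ℤ) := by
  have h : d.m1 p ≤ bndA d.n1 p := d.D1 p hp
  rw [xf1, Int.toNat_of_nonneg (by omega)]
  ring

lemma m2_eq (d : QPData) {p : ℕ} (hp : p < d.P2) :
    d.m2 p = bndB d.P1 d.n1 d.n2 p - (xf2 d p : ℤ) := by
  have h : d.m2 p ≤ bndB d.P1 d.n1 d.n2 p := d.D3 p hp
  rw [xf2, Int.toNat_of_nonneg (by omega)]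
  ring

lemma energy_master (d : QPData) (N : ℕ) (h1 : ∀ p, d.n1 p ≤ N) (h2 : ∀ p, d.n2 p ≤ N) :
    d.energy = (∑ p ∈ Finset.range d.P1, (xf1 d p : ℤ)) + (∑ p ∈ Finset.range d.P2, (xf2 d p : ℤ))
      + ((∑ s ∈ Finset.range N, (rho d s : ℤ) ^ 2) + (∑ s ∈ Finset.range N, (sig d s : ℤ) ^ 2)
        - ∑ s ∈ Finset.range N, (rho d s : ℤ) * ((sig d (2 * s) : ℤ) + (sig d (2 * s + 1) : ℤ))) := by
  have hm1 : ∑ p ∈ Finset.range d.P1, d.m1 p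
      = ∑ p ∈ Finset.range d.P1, bndA d.n1 p - ∑ p ∈ Finset.range d.P1, (xf1 d p : ℤ) := by
    rw [← Finset.sum_sub_distrib]
    apply Finset.sum_congr rfl
    intro p hp
    exact m1_eq d (Finset.mem_range.mp hp)
  have hm2 : ∑ p ∈ Finset.range d.P2, d.m2 p
      = ∑ p ∈ Finset.range d.P2, bndB d.P1 d.n1 d.n2 p - ∑ p ∈ Finset.range d.P2, (xf2 d p : ℤ) := by
    rw [← Finset.sum_sub_distrib]
    apply Finset.sum_congr rfl
    intro p hp
    exact m2_eq d (Finset.mem_range.mp hp)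
  -- natural-number quantities
  set SA : ℕ := ∑ p ∈ Finset.range d.P1, (d.n1 p + 2 * ∑ p' ∈ Finset.range p, min (d.n1 p) (d.n1 p')) with hSA
  set SB : ℕ := ∑ p ∈ Finset.range d.P2, (d.n2 p + 2 * ∑ p' ∈ Finset.range p, min (d.n2 p) (d.n2 p')) with hSB
  set CR : ℕ := ∑ p ∈ Finset.range d.P2, ∑ q ∈ Finset.range d.P1, min (2 * d.n1 q) (d.n2 p) with hCR
  have hbA : ∑ p ∈ Finset.range d.P1, bndA d.n1 p = -(SA : ℤ) := by
    rw [hSA]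
    push_cast
    rw [← Finset.sum_neg_distrib]
    apply Finset.sum_congr rfl
    intro p _
    rw [bndA]
    push_cast
    ring
  have hbB : ∑ p ∈ Finset.range d.P2, bndB d.P1 d.n1 d.n2 p = -(SB : ℤ) + (CR : ℤ) := by
    rw [hSB, hCR]
    push_cast
    rw [← Finset.sum_neg_distrib, ← Finset.sum_add_distrib]
    apply Finset.sum_congr rfl
    intro p _
    rw [bndB]
    push_cast
    ring
  have hSAval : SA = ∑ s ∈ Finset.range N, rho d s * rho d s := by
    rw [hSA]
    rw [← double_min_sum (hir1 d) (h1) (rho_le d)]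
    rw [diag_sum (fun a b => min (d.n1 a) (d.n1 b)) (fun a b => min_comm _ _) d.P1]
    apply Finset.sum_congr rfl
    intro p _
    rw [min_self]
  have hSBval : SB = ∑ s ∈ Finset.range N, sig d s * sig d s := by
    rw [hSB]
    rw [← double_min_sum (hir2 d) (h2) (sig_le d)]
    rw [diag_sum (fun a b => min (d.n2 a) (d.n2 b)) (fun a b => min_comm _ _) d.P2]
    apply Finset.sum_congr rfl
    intro p _
    rw [min_self]
  have hCRval : CR = ∑ s ∈ Finset.range N, rho d s * (sig d (2 * s) + sig d (2 * s + 1)) := by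
    rw [hCR]
    exact cross_min_sum (hir1 d) (hir2 d) h1 (fun p => by have := h2 p; omega) (rho_le d) (sig_le d)
  have e1 : (∑ s ∈ Finset.range N, (rho d s : ℤ) ^ 2) = (SA : ℤ) := by
    rw [hSAval]
    push_cast
    apply Finset.sum_congr rfl
    intro s _
    ring
  have e2 : (∑ s ∈ Finset.range N, (sig d s : ℤ) ^ 2) = (SB : ℤ) := by
    rw [hSBval]
    push_cast
    apply Finset.sum_congr rfl
    intro s _
    ring
  have e3 : (∑ s ∈ Finset.range N, (rho d s : ℤ) * ((sig d (2 * s) : ℤ) + (sig d (2 * s + 1) : ℤ)))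
      = (CR : ℤ) := by
    rw [hCRval]
    push_cast
    rfl
  rw [QPData.energy, hm1, hm2, hbA, hbB, e1, e2, e3]
  ring

lemma charge_sum1 (d : QPData) (N : ℕ) (h1 : ∀ p, d.n1 p ≤ N) :
    ∑ s ∈ Finset.range N, rho d s = ∑ p ∈ Finset.range d.P1, d.n1 p :=
  nconj_sum (fun p _ => h1 p)

lemma charge_sum2 (d : QPData) (N : ℕ) (h2 : ∀ p, d.n2 p ≤ N) :
    ∑ s ∈ Finset.range N, sig d s = ∑ p ∈ Finset.range d.P2, d.n2 p :=
  nconj_sum (fun p _ => h2 p)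

lemma finsum_eq_range {M : Type*} [AddCommMonoid M] (f : ℕ → M) {N : ℕ}
    (h : ∀ s, N ≤ s → f s = 0) : ∑ᶠ s, f s = ∑ s ∈ Finset.range N, f s := by
  apply finsum_eq_sum_of_support_subset
  intro s hs
  simp only [Function.mem_support] at hs
  simp only [Finset.coe_range, Set.mem_Iio]
  by_contra hc
  exact hs (h s (by omega))

end QPB

namespace QPB
open Finset

def RProp (m : ℤ) (r1 r2 : ℕ) (x : (ℕ → ℕ) × (ℕ → ℕ) × (ℕ → Ptn) × (ℕ → Ptn)) : Prop :=
  (∀ i j, i ≤ j → x.1 j ≤ x.1 i) ∧ (∃ N, ∀ s, N ≤ s → x.1 s = 0) ∧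
  (∑ᶠ s, x.1 s = r1) ∧
  (∀ i j, i ≤ j → x.2.1 j ≤ x.2.1 i) ∧ (∃ N, ∀ s, N ≤ s → x.2.1 s = 0) ∧
  (∑ᶠ s, x.2.1 s = r2) ∧
  (∀ s, (x.2.2.1 s).length ≤ x.1 s - x.1 (s + 1)) ∧
  (∃ N, ∀ s, N ≤ s → (x.2.2.1 s).parts = []) ∧
  (∀ s, (x.2.2.2 s).length ≤ x.2.1 s - x.2.1 (s + 1)) ∧
  (∃ N, ∀ s, N ≤ s → (x.2.2.2 s).parts = []) ∧
  ((∑ᶠ s, ((x.2.2.1 s).size : ℤ)) + (∑ᶠ s, ((x.2.2.2 s).size : ℤ))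
    = m - ((∑ᶠ s, (x.1 s : ℤ) ^ 2) + (∑ᶠ s, (x.2.1 s : ℤ) ^ 2)
        - ∑ᶠ s, (x.1 s : ℤ) * ((x.2.1 (2 * s) : ℤ) + (x.2.1 (2 * s + 1) : ℤ))))

lemma parts_empty1 (d : QPData) {s : ℕ} (hs : d.n1 0 ≤ s) : ((phi d).2.2.1 s).parts = [] := by
  show (blockList (xf1 d) (rho d) s).filter _ = []
  have h1 : rho d s = 0 := rho_vanish d hs
  have h2 : rho d (s + 1) = 0 := rho_vanish d (by omega)
  rw [blockList, h1, h2]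
  simp

lemma parts_empty2 (d : QPData) {s : ℕ} (hs : d.n2 0 ≤ s) : ((phi d).2.2.2 s).parts = [] := by
  show (blockList (xf2 d) (sig d) s).filter _ = []
  have h1 : sig d s = 0 := sig_vanish d hs
  have h2 : sig d (s + 1) = 0 := sig_vanish d (by omega)
  rw [blockList, h1, h2]
  simp

lemma phi_mem (m : ℤ) (r1 r2 : ℕ) (d : QPData)
    (hc : d.colorType = (r2, r1)) (he : d.energy = m) : RProp m r1 r2 (phi d) := by
  set N := d.n1 0 + d.n2 0 with hN
  have hn1N : ∀ p, d.n1 p ≤ N := fun p => by have := n1_le d p; omega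
  have hn2N : ∀ p, d.n2 p ≤ N := fun p => by have := n2_le d p; omega
  have hrv : ∀ s, N ≤ s → rho d s = 0 := fun s hs => rho_vanish d (by omega)
  have hsv : ∀ s, N ≤ s → sig d s = 0 := fun s hs => sig_vanish d (by omega)
  have hc1 : ∑ p ∈ Finset.range d.P1, d.n1 p = r1 := congrArg Prod.snd hc
  have hc2 : ∑ p ∈ Finset.range d.P2, d.n2 p = r2 := congrArg Prod.fst hc
  refine ⟨fun i j hij => rho_anti d hij, ⟨N, hrv⟩, ?_,
          fun i j hij => sig_anti d hij, ⟨N, hsv⟩, ?_,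
          fun s => parts_len_le1 d s, ⟨N, fun s hs => parts_empty1 d (by omega)⟩,
          fun s => parts_len_le2 d s, ⟨N, fun s hs => parts_empty2 d (by omega)⟩, ?_⟩
  · show ∑ᶠ s, rho d s = r1
    rw [finsum_eq_range _ hrv, charge_sum1 d N hn1N]
    exact hc1
  · show ∑ᶠ s, sig d s = r2
    rw [finsum_eq_range _ hsv, charge_sum2 d N hn2N]
    exact hc2
  · have hE := energy_master d N hn1N hn2N
    rw [he] at hE
    have hz1 : ∀ s, N ≤ s → (((phi d).2.2.1 s).size : ℤ) = 0 := by
      intro s hs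
      rw [Ptn.size, parts_empty1 d (by omega)]
      simp
    have hz2 : ∀ s, N ≤ s → (((phi d).2.2.2 s).size : ℤ) = 0 := by
      intro s hs
      rw [Ptn.size, parts_empty2 d (by omega)]
      simp
    rw [finsum_eq_range _ hz1, finsum_eq_range _ hz2,
      finsum_eq_range (fun s => ((phi d).1 s : ℤ) ^ 2) (N := N) (fun s hs => by
        show ((rho d s : ℤ))^2 = 0; rw [hrv s hs]; simp),
      finsum_eq_range (fun s => ((phi d).2.1 s : ℤ) ^ 2) (N := N) (fun s hs => by
        show ((sig d s : ℤ))^2 = 0; rw [hsv s hs]; simp),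
      finsum_eq_range (fun s => ((phi d).1 s : ℤ) * (((phi d).2.1 (2*s) : ℤ) + ((phi d).2.1 (2*s+1) : ℤ)))
        (N := N) (fun s hs => by
        show ((rho d s : ℤ)) * _ = 0; rw [hrv s hs]; simp)]
    have hx1 : ∑ s ∈ Finset.range N, (((phi d).2.2.1 s).size : ℤ)
        = ∑ p ∈ Finset.range d.P1, (xf1 d p : ℤ) := by
      rw [← Nat.cast_sum, ← Nat.cast_sum, ← xsum_eq_sizes1 d N (hrv N (le_refl N))]
    have hx2 : ∑ s ∈ Finset.range N, (((phi d).2.2.2 s).size : ℤ)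
        = ∑ p ∈ Finset.range d.P2, (xf2 d p : ℤ) := by
      rw [← Nat.cast_sum, ← Nat.cast_sum, ← xsum_eq_sizes2 d N (hsv N (le_refl N))]
    rw [hx1, hx2]
    show _ = m - ((∑ s ∈ Finset.range N, (rho d s : ℤ)^2) + (∑ s ∈ Finset.range N, (sig d s : ℤ)^2)
        - ∑ s ∈ Finset.range N, (rho d s : ℤ) * ((sig d (2*s) : ℤ) + (sig d (2*s+1) : ℤ)))
    omega

end QPB

namespace QPB
open Finset

lemma nat_eq_forall_lt {a b : ℕ} (h : ∀ s, s < a ↔ s < b) : a = b := by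
  have h1 := h a
  have h2 := h b
  omega

lemma qpdata_ext {d d' : QPData} (h1 : d.P1 = d'.P1) (h2 : d.P2 = d'.P2)
    (h3 : d.n1 = d'.n1) (h4 : d.n2 = d'.n2) (h5 : d.m1 = d'.m1) (h6 : d.m2 = d'.m2) :
    d = d' := by
  cases d; cases d'
  simp only at h1 h2 h3 h4 h5 h6
  subst h1; subst h2; subst h3; subst h4; subst h5; subst h6
  rfl

lemma phi_inj {d d' : QPData} (h : phi d = phi d') : d = d' := by
  have hρ : rho d = rho d' := congrArg Prod.fst h
  have hσ : sig d = sig d' := congrArg (fun x => x.2.1) h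
  have hπ : (phi d).2.2.1 = (phi d').2.2.1 := congrArg (fun x => x.2.2.1) h
  have hτ : (phi d).2.2.2 = (phi d').2.2.2 := congrArg (fun x => x.2.2.2) h
  have hn1 : d.n1 = d'.n1 := by
    funext p
    apply nat_eq_forall_lt
    intro s
    rw [hir1 d, hir1 d', hρ]
  have hn2 : d.n2 = d'.n2 := by
    funext p
    apply nat_eq_forall_lt
    intro s
    rw [hir2 d, hir2 d', hσ]
  have hP1 : d.P1 = d'.P1 := by rw [← rho_zero d, ← rho_zero d', hρ]
  have hP2 : d.P2 = d'.P2 := by rw [← sig_zero d, ← sig_zero d', hσ]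
  have hx1 : ∀ p, p < d.P1 → xf1 d p = xf1 d' p := by
    intro p hp
    have hpos : 0 < d.n1 p := d.n1_pos p hp
    set s := d.n1 p - 1 with hs
    have hblock : rho d (s + 1) ≤ p ∧ p < rho d s := (block1_iff d s p).mp (by omega)
    have hblock' : rho d' (s + 1) ≤ p ∧ p < rho d' s := by rw [← hρ]; exact hblock
    rw [x1_eq_getD d hblock.1 hblock.2, x1_eq_getD d' hblock'.1 hblock'.2, hπ, hρ]
  have hx2 : ∀ p, p < d.P2 → xf2 d p = xf2 d' p := by
    intro p hp
    have hpos : 0 < d.n2 p := d.n2_pos p hp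
    set s := d.n2 p - 1 with hs
    have hblock : sig d (s + 1) ≤ p ∧ p < sig d s := (block2_iff d s p).mp (by omega)
    have hblock' : sig d' (s + 1) ≤ p ∧ p < sig d' s := by rw [← hσ]; exact hblock
    rw [x2_eq_getD d hblock.1 hblock.2, x2_eq_getD d' hblock'.1 hblock'.2, hτ, hσ]
  have hm1 : d.m1 = d'.m1 := by
    funext p
    rcases lt_or_ge p d.P1 with hp | hp
    · rw [m1_eq d hp, m1_eq d' (by omega), hn1, hx1 p hp]
    · rw [d.m1_zero p hp, d'.m1_zero p (by omega)]
  have hm2 : d.m2 = d'.m2 := by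
    funext p
    rcases lt_or_ge p d.P2 with hp | hp
    · rw [m2_eq d hp, m2_eq d' (by omega), hn1, hn2, hP1, hx2 p hp]
    · rw [d.m2_zero p hp, d'.m2_zero p (by omega)]
  exact qpdata_ext hP1 hP2 hn1 hn2 hm1 hm2

end QPB

namespace QPB
open Finset

def xval (ρ : ℕ → ℕ) (π : ℕ → Ptn) (n : ℕ → ℕ) (p : ℕ) : ℕ :=
  (π (n p - 1)).parts.getD (ρ (n p - 1) - 1 - p) 0

lemma key_iff {ρ : ℕ → ℕ} {N : ℕ} (hρa : ∀ i j, i ≤ j → ρ j ≤ ρ i)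
    (hρ0 : ∀ s, N ≤ s → ρ s = 0) (s p : ℕ) : p < ρ s ↔ s < nconj N ρ p :=
  conj_iff (fun a b hab _ => hρa a b hab) hρ0 p s

noncomputable def build (ρ σ : ℕ → ℕ) (π τ : ℕ → Ptn) (N : ℕ)
    (hρa : ∀ i j, i ≤ j → ρ j ≤ ρ i) (hρ0 : ∀ s, N ≤ s → ρ s = 0)
    (hσa : ∀ i j, i ≤ j → σ j ≤ σ i) (hσ0 : ∀ s, N ≤ s → σ s = 0) : QPData where
  P1 := ρ 0
  P2 := σ 0
  n1 := fun p => nconj N ρ p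
  n2 := fun p => nconj N σ p
  m1 := fun p => if p < ρ 0 then
      bndA (fun q => nconj N ρ q) p - (xval ρ π (fun q => nconj N ρ q) p : ℤ) else 0
  m2 := fun p => if p < σ 0 then
      bndB (ρ 0) (fun q => nconj N ρ q) (fun q => nconj N σ q) p
        - (xval σ τ (fun q => nconj N σ q) p : ℤ) else 0
  n1_pos := fun p hp => (key_iff hρa hρ0 0 p).mp hp
  n2_pos := fun p hp => (key_iff hσa hσ0 0 p).mp hp
  n1_anti := fun p q hpq _ => nconj_anti N ρ hpq
  n2_anti := fun p q hpq _ => nconj_anti N σ hpq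
  n1_zero := fun p hp => by
    have := key_iff hρa hρ0 0 p
    show nconj N ρ p = 0
    omega
  n2_zero := fun p hp => by
    have := key_iff hσa hσ0 0 p
    show nconj N σ p = 0
    omega
  m1_zero := fun p hp => by simp only [if_neg (by omega : ¬ p < ρ 0)]
  m2_zero := fun p hp => by simp only [if_neg (by omega : ¬ p < σ 0)]
  D1 := by
    intro p hp
    simp only [if_pos hp]
    show bndA (fun q => nconj N ρ q) p - _ ≤ bndA (fun q => nconj N ρ q) p
    have h0 : (0:ℤ) ≤ (xval ρ π (fun q => nconj N ρ q) p : ℤ) := Int.natCast_nonneg _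
    omega
  D2 := by
    intro p hP h
    have hp : p < ρ 0 := by omega
    simp only [if_pos hP, if_pos hp]
    set n : ℕ → ℕ := fun q => nconj N ρ q with hn
    have hpos : 0 < n p := (key_iff hρa hρ0 0 p).mp hp
    set s : ℕ := n p - 1 with hs
    have k1 : p < ρ s ↔ s < n p := key_iff hρa hρ0 s p
    have k2 : p < ρ (s+1) ↔ s + 1 < n p := key_iff hρa hρ0 (s+1) p
    have k1' : p + 1 < ρ s ↔ s < n (p+1) := key_iff hρa hρ0 s (p+1)
    have hb1 : p < ρ s := by omega
    have hb2 : ρ (s+1) ≤ p := by omega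
    have hh : n (p+1) = n p := h
    have hb1' : p + 1 < ρ s := by omega
    have hsucc : n (p+1) - 1 = s := by omega
    have hbnd := bndA_succ n p h
    have hxm : xval ρ π n p ≤ xval ρ π n (p+1) := by
      rw [xval, xval, hsucc, hs]
      exact getD_anti (π (n p - 1)).sorted (by omega)
    have hcast : (xval ρ π n p : ℤ) ≤ (xval ρ π n (p+1) : ℤ) := by exact_mod_cast hxm
    rw [hbnd]
    have hnn : ((n p : ℤ)) = ((nconj N ρ p : ℤ)) := by rw [hn]
    omega
  D3 := by
    intro p hp
    simp only [if_pos hp]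
    show bndB (ρ 0) (fun q => nconj N ρ q) (fun q => nconj N σ q) p - _
      ≤ bndB (ρ 0) (fun q => nconj N ρ q) (fun q => nconj N σ q) p
    have h0 : (0:ℤ) ≤ (xval σ τ (fun q => nconj N σ q) p : ℤ) := Int.natCast_nonneg _
    omega
  D4 := by
    intro p hP h
    have hp : p < σ 0 := by omega
    simp only [if_pos hP, if_pos hp]
    set n : ℕ → ℕ := fun q => nconj N σ q with hn
    have hpos : 0 < n p := (key_iff hσa hσ0 0 p).mp hp
    set s : ℕ := n p - 1 with hs
    have k1 : p < σ s ↔ s < n p := key_iff hσa hσ0 s p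
    have k2 : p < σ (s+1) ↔ s + 1 < n p := key_iff hσa hσ0 (s+1) p
    have k1' : p + 1 < σ s ↔ s < n (p+1) := key_iff hσa hσ0 s (p+1)
    have hb1 : p < σ s := by omega
    have hb2 : σ (s+1) ≤ p := by omega
    have hh : n (p+1) = n p := h
    have hb1' : p + 1 < σ s := by omega
    have hsucc : n (p+1) - 1 = s := by omega
    have hbnd := bndB_succ (ρ 0) (fun q => nconj N ρ q) n p h
    have hxm : xval σ τ n p ≤ xval σ τ n (p+1) := by
      rw [xval, xval, hsucc, hs]
      exact getD_anti (τ (n p - 1)).sorted (by omega)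
    have hcast : (xval σ τ n p : ℤ) ≤ (xval σ τ n (p+1) : ℤ) := by exact_mod_cast hxm
    rw [hbnd]
    have hnn : ((n p : ℤ)) = ((nconj N σ p : ℤ)) := by rw [hn]
    omega

end QPB

namespace QPB
open Finset

lemma phi_surj (m : ℤ) (r1 r2 : ℕ) (x : (ℕ → ℕ) × (ℕ → ℕ) × (ℕ → Ptn) × (ℕ → Ptn))
    (hx : RProp m r1 r2 x) :
    ∃ d : QPData, (d.colorType = (r2, r1) ∧ d.energy = m) ∧ phi d = x := by
  obtain ⟨ρ, σ, π, τ⟩ := x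
  rw [RProp] at hx
  dsimp only at hx
  obtain ⟨hρa, ⟨N1, hN1⟩, hρsum, hσa, ⟨N2, hN2⟩, hσsum, hπlen, ⟨N3, hN3⟩,
    hτlen, ⟨N4, hN4⟩, hsum⟩ := hx
  set N := N1 + N2 + N3 + N4 with hNdef
  have hρ0 : ∀ s, N ≤ s → ρ s = 0 := fun s hs => hN1 s (by omega)
  have hσ0 : ∀ s, N ≤ s → σ s = 0 := fun s hs => hN2 s (by omega)
  have hπ0 : ∀ s, N ≤ s → (π s).parts = [] := fun s hs => hN3 s (by omega)
  have hτ0 : ∀ s, N ≤ s → (τ s).parts = [] := fun s hs => hN4 s (by omega)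
  set d := build ρ σ π τ N hρa hρ0 hσa hσ0 with hd
  have hrho : rho d = ρ := by
    funext s
    apply nat_eq_forall_lt
    intro p
    have k : p < ρ s ↔ s < d.n1 p := key_iff hρa hρ0 s p
    have h2 : s < d.n1 p ↔ p < rho d s := hir1 d s p
    omega
  have hsig : sig d = σ := by
    funext s
    apply nat_eq_forall_lt
    intro p
    have k : p < σ s ↔ s < d.n2 p := key_iff hσa hσ0 s p
    have h2 : s < d.n2 p ↔ p < sig d s := hir2 d s p
    omega
  have hx1v : ∀ p, p < ρ 0 → xf1 d p = xval ρ π d.n1 p := by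
    intro p hp
    have hm : d.m1 p = bndA d.n1 p - (xval ρ π d.n1 p : ℤ) := if_pos hp
    rw [xf1, hm]
    have he : bndA d.n1 p - (bndA d.n1 p - (xval ρ π d.n1 p : ℤ))
        = (xval ρ π d.n1 p : ℤ) := by ring
    rw [he, Int.toNat_natCast]
  have hx2v : ∀ p, p < σ 0 → xf2 d p = xval σ τ d.n2 p := by
    intro p hp
    have hm : d.m2 p = bndB (ρ 0) d.n1 d.n2 p - (xval σ τ d.n2 p : ℤ) := if_pos hp
    rw [xf2, hm]
    have hP : d.P1 = ρ 0 := rfl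
    rw [hP]
    have he : bndB (ρ 0) d.n1 d.n2 p - (bndB (ρ 0) d.n1 d.n2 p - (xval σ τ d.n2 p : ℤ))
        = (xval σ τ d.n2 p : ℤ) := by ring
    rw [he, Int.toNat_natCast]
  have hπeq : (phi d).2.2.1 = π := by
    funext s
    apply Ptn.ext'
    show (blockList (xf1 d) (rho d) s).filter (fun a => 0 < a) = (π s).parts
    rw [hrho]
    have hL : (π s).parts.length ≤ ρ s - ρ (s + 1) := hπlen s
    have hmap : blockList (xf1 d) ρ s
        = (List.range (ρ s - ρ (s + 1))).map (fun j => (π s).parts.getD j 0) := by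
      rw [blockList]
      apply List.map_congr_left
      intro j hj
      rw [List.mem_range] at hj
      have hρs : ρ (s + 1) ≤ ρ s := hρa s (s + 1) (by omega)
      have hp0 : ρ s - 1 - j < ρ 0 := by have := hρa 0 s (by omega); omega
      have k1 : ρ s - 1 - j < ρ s ↔ s < d.n1 (ρ s - 1 - j) := key_iff hρa hρ0 s _
      have k2 : ρ s - 1 - j < ρ (s + 1) ↔ s + 1 < d.n1 (ρ s - 1 - j) :=
        key_iff hρa hρ0 (s + 1) _
      have hnp : d.n1 (ρ s - 1 - j) = s + 1 := by omega
      rw [hx1v _ hp0, xval, hnp]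
      simp only [Nat.add_sub_cancel]
      congr 1
      omega
    rw [hmap, map_range_getD _ _ hL, filter_append_replicate_zero _ _ (π s).pos]
  have hτeq : (phi d).2.2.2 = τ := by
    funext s
    apply Ptn.ext'
    show (blockList (xf2 d) (sig d) s).filter (fun a => 0 < a) = (τ s).parts
    rw [hsig]
    have hL : (τ s).parts.length ≤ σ s - σ (s + 1) := hτlen s
    have hmap : blockList (xf2 d) σ s
        = (List.range (σ s - σ (s + 1))).map (fun j => (τ s).parts.getD j 0) := by
      rw [blockList]
      apply List.map_congr_left
      intro j hj
      rw [List.mem_range] at hj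
      have hσs : σ (s + 1) ≤ σ s := hσa s (s + 1) (by omega)
      have hp0 : σ s - 1 - j < σ 0 := by have := hσa 0 s (by omega); omega
      have k1 : σ s - 1 - j < σ s ↔ s < d.n2 (σ s - 1 - j) := key_iff hσa hσ0 s _
      have k2 : σ s - 1 - j < σ (s + 1) ↔ s + 1 < d.n2 (σ s - 1 - j) :=
        key_iff hσa hσ0 (s + 1) _
      have hnp : d.n2 (σ s - 1 - j) = s + 1 := by omega
      rw [hx2v _ hp0, xval, hnp]
      simp only [Nat.add_sub_cancel]
      congr 1
      omega
    rw [hmap, map_range_getD _ _ hL, filter_append_replicate_zero _ _ (τ s).pos]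
  have hb1 : ∀ p, d.n1 p ≤ N := fun p => nconj_le N ρ p
  have hb2 : ∀ p, d.n2 p ≤ N := fun p => nconj_le N σ p
  have hcol : d.colorType = (r2, r1) := by
    rw [QPData.colorType]
    have h1 : ∑ p ∈ Finset.range d.P1, d.n1 p = r1 := by
      rw [← charge_sum1 d N hb1, hrho, ← finsum_eq_range ρ hρ0]
      exact hρsum
    have h2 : ∑ p ∈ Finset.range d.P2, d.n2 p = r2 := by
      rw [← charge_sum2 d N hb2, hsig, ← finsum_eq_range σ hσ0]
      exact hσsum
    rw [h1, h2]
  have hen : d.energy = m := by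
    have hE := energy_master d N hb1 hb2
    have hs1 : ∑ p ∈ Finset.range d.P1, (xf1 d p : ℤ) = ∑ s ∈ Finset.range N, ((π s).size : ℤ) := by
      rw [← Nat.cast_sum, xsum_eq_sizes1 d N (by rw [hrho]; exact hρ0 N le_rfl), hπeq,
        Nat.cast_sum]
    have hs2 : ∑ p ∈ Finset.range d.P2, (xf2 d p : ℤ) = ∑ s ∈ Finset.range N, ((τ s).size : ℤ) := by
      rw [← Nat.cast_sum, xsum_eq_sizes2 d N (by rw [hsig]; exact hσ0 N le_rfl), hτeq,
        Nat.cast_sum]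
    rw [hs1, hs2, hrho, hsig] at hE
    rw [finsum_eq_range (fun s => ((π s).size : ℤ)) (N := N) (fun s hs => by
          show ((π s).size : ℤ) = 0
          rw [Ptn.size, hπ0 s hs]; simp),
        finsum_eq_range (fun s => ((τ s).size : ℤ)) (N := N) (fun s hs => by
          show ((τ s).size : ℤ) = 0
          rw [Ptn.size, hτ0 s hs]; simp),
        finsum_eq_range (fun s => ((ρ s : ℤ)) ^ 2) (N := N) (fun s hs => by
          show ((ρ s : ℤ)) ^ 2 = 0
          rw [hρ0 s hs]; simp),
        finsum_eq_range (fun s => ((σ s : ℤ)) ^ 2) (N := N) (fun s hs => by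
          show ((σ s : ℤ)) ^ 2 = 0
          rw [hσ0 s hs]; simp),
        finsum_eq_range (fun s => (ρ s : ℤ) * ((σ (2 * s) : ℤ) + (σ (2 * s + 1) : ℤ)))
          (N := N) (fun s hs => by
          show (ρ s : ℤ) * ((σ (2 * s) : ℤ) + (σ (2 * s + 1) : ℤ)) = 0
          rw [hρ0 s hs]; simp)] at hsum
    omega
  refine ⟨d, ⟨hcol, hen⟩, ?_⟩
  have hsplit : phi d = (rho d, sig d, (phi d).2.2.1, (phi d).2.2.2) := rfl
  rw [hsplit, hrho, hsig, hπeq, hτeq]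

end QPB

/-- For every integer `m` and nonnegative integers `r₁, r₂`, the
number of quasi-particle data (with no bound on the charges) of color-type `(r₂, r₁)`
and total energy `m` equals the number of tuples `(ρ, σ, π, τ)` where `ρ, σ` are
weakly decreasing eventually-zero sequences of nonnegative integers with
`Σ_s ρ_s = r₁`, `Σ_s σ_s = r₂` (`ρ s` denotes the paper's `r₁⁽ˢ⁺¹⁾`, etc.), and
`(π⁽ˢ⁾)_{s≥1}`, `(τ⁽ˢ⁾)_{s≥1}` are families of partitions, all but finitely many
empty, with `ℓ(π⁽ˢ⁾) ≤ r₁⁽ˢ⁾ − r₁⁽ˢ⁺¹⁾`, `ℓ(τ⁽ˢ⁾) ≤ r₂⁽ˢ⁾ − r₂⁽ˢ⁺¹⁾` for all `s`, and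
`Σ_s |π⁽ˢ⁾| + Σ_s |τ⁽ˢ⁾| = m − E(ρ,σ)`, where
`E(ρ,σ) = Σ_s (r₁⁽ˢ⁾)² + Σ_s (r₂⁽ˢ⁾)² − Σ_s r₁⁽ˢ⁾ (r₂⁽²ˢ⁻¹⁾ + r₂⁽²ˢ⁾)`.
(Counting such tuples realizes the sum over all pairs `(ρ, σ)` of the number of
corresponding families of partitions.) -/
theorem card_qpdata_eq_fermionic_count
    (m : ℤ) (r1 r2 : ℕ) :
    Nat.card {d : QPData // d.colorType = (r2, r1) ∧ d.energy = m}
      = Nat.card {x : (ℕ → ℕ) × (ℕ → ℕ) × (ℕ → Ptn) × (ℕ → Ptn) //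
          (∀ i j, i ≤ j → x.1 j ≤ x.1 i) ∧ (∃ N, ∀ s, N ≤ s → x.1 s = 0) ∧
          (∑ᶠ s, x.1 s = r1) ∧
          (∀ i j, i ≤ j → x.2.1 j ≤ x.2.1 i) ∧ (∃ N, ∀ s, N ≤ s → x.2.1 s = 0) ∧
          (∑ᶠ s, x.2.1 s = r2) ∧
          (∀ s, (x.2.2.1 s).length ≤ x.1 s - x.1 (s + 1)) ∧
          (∃ N, ∀ s, N ≤ s → (x.2.2.1 s).parts = []) ∧
          (∀ s, (x.2.2.2 s).length ≤ x.2.1 s - x.2.1 (s + 1)) ∧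
          (∃ N, ∀ s, N ≤ s → (x.2.2.2 s).parts = []) ∧
          ((∑ᶠ s, ((x.2.2.1 s).size : ℤ)) + (∑ᶠ s, ((x.2.2.2 s).size : ℤ))
            = m - ((∑ᶠ s, (x.1 s : ℤ) ^ 2) + (∑ᶠ s, (x.2.1 s : ℤ) ^ 2)
                - ∑ᶠ s, (x.1 s : ℤ) * ((x.2.1 (2 * s) : ℤ) + (x.2.1 (2 * s + 1) : ℤ))))} := by
  have hbij : Function.Bijective
      (fun a : {d : QPData // d.colorType = (r2, r1) ∧ d.energy = m} =>
        (⟨QPB.phi a.1, QPB.phi_mem m r1 r2 a.1 a.2.1 a.2.2⟩ :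
          {x : (ℕ → ℕ) × (ℕ → ℕ) × (ℕ → Ptn) × (ℕ → Ptn) // QPB.RProp m r1 r2 x})) := by
    constructor
    · rintro ⟨d, hd⟩ ⟨d', hd'⟩ h
      simp only [Subtype.mk.injEq] at h
      exact Subtype.ext (QPB.phi_inj h)
    · rintro ⟨x, hx⟩
      obtain ⟨d, hcd, hphi⟩ := QPB.phi_surj m r1 r2 x hx
      exact ⟨⟨d, hcd⟩, Subtype.ext hphi⟩
  exact Nat.card_eq_of_bijective _ hbij
end

section
/- Fix an integer k ≥ 1 and an integer s with 1 ≤ s ≤ k. Let b be a k-admissible quasi-particle datum with color-1 charges n_{P₁,1} ≤ … ≤ n_{1,1} and energies (m_{p,1})_{p=1}^{P₁}, and color-2 charges n_{P₂,2} ≤ … ≤ n_{1,2} and energies (m_{p,2})_{p=1}^{P₂}, and assume P₁ ≥ 1, n_{1,1} = s and m_{1,1} = −s. Define a new datum b' as follows: the color-1 quasiparticle with index p = 1 is deleted, the remaining color-1 charges are unchanged and their energies become m'_{p,1} = m_{p,1} + 2·n_{p,1} for 2 ≤ p ≤ P₁; the color-2 charges are unchanged and their energies become m'_{p,2} = m_{p,2}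 − min{n_{p,2}, 2s} for 1 ≤ p ≤ P₂. Then b' is again a k-admissible quasi-particle datum (i.e., its charges and energies satisfy the difference conditions (D1)–(D4) and the charge bounds). -/
/-- Proposition 3.3 of the paper.  Fix `k ≥ 1` and `1 ≤ s ≤ k`.
Let `b` be a `k`-admissible quasi-particle datum with `P₁ ≥ 1` whose largest color-1
charge is `n_{1,1} = s` with energy `m_{1,1} = −s` (in our 0-based indexing:
`n1 0 = s`, `m1 0 = −s`).  Delete that quasi-particle, replace the remaining color-1
energies by `m'_{p,1} = m_{p,1} + 2 n_{p,1}` and the color-2 energies by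
`m'_{p,2} = m_{p,2} − min (n_{p,2}) (2s)`, keeping all charges.  Then the result is
again a `k`-admissible quasi-particle datum. -/
theorem qpdata_weyl_translation
    (k s : ℕ) (hk : 1 ≤ k) (hs : 1 ≤ s) (hsk : s ≤ k)
    (b : QPData) (hadm : b.Admissible k)
    (hP1 : 1 ≤ b.P1) (hcharge : b.n1 0 = s) (henergy : b.m1 0 = -(s : ℤ)) :
    ∃ b' : QPData,
      b'.P1 = b.P1 - 1 ∧
      b'.P2 = b.P2 ∧
      b'.n1 = (fun p => b.n1 (p + 1)) ∧
      b'.n2 = b.n2 ∧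
      b'.m1 = (fun p => b.m1 (p + 1) + 2 * (b.n1 (p + 1) : ℤ)) ∧
      b'.m2 = (fun p => b.m2 p - (min (b.n2 p) (2 * s) : ℤ)) ∧
      b'.Admissible k := by
  refine ⟨{ P1 := b.P1 - 1, P2 := b.P2,
            n1 := fun p => b.n1 (p + 1), n2 := b.n2,
            m1 := fun p => b.m1 (p + 1) + 2 * (b.n1 (p + 1) : ℤ),
            m2 := fun p => b.m2 p - (min (b.n2 p) (2 * s) : ℤ),
            n1_pos := ?_, n2_pos := b.n2_pos,
            n1_anti := ?_, n2_anti := b.n2_anti,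
            n1_zero := ?_, n2_zero := b.n2_zero,
            m1_zero := ?_, m2_zero := ?_,
            D1 := ?_, D2 := ?_, D3 := ?_, D4 := ?_ },
          rfl, rfl, rfl, rfl, rfl, rfl, ?_, ?_⟩
  · exact fun p hp => b.n1_pos (p + 1) (by omega)
  · exact fun p q hpq hq => b.n1_anti (p + 1) (q + 1) (by omega) (by omega)
  · exact fun p hp => b.n1_zero (p + 1) (by omega)
  · intro p hp
    rw [b.m1_zero (p + 1) (by omega), b.n1_zero (p + 1) (by omega)]
    ring
  · intro p hp
    rw [b.m2_zero p hp, b.n2_zero p hp]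
    simp
  · -- D1
    intro p hp
    have hp1 : p + 1 < b.P1 := by omega
    have h := b.D1 (p + 1) hp1
    rw [Finset.sum_range_succ'] at h
    have hle : b.n1 (p + 1) ≤ b.n1 0 := b.n1_anti 0 (p + 1) (by omega) hp1
    rw [min_eq_left (by exact_mod_cast hle : ((b.n1 (p+1) : ℤ) ≤ (b.n1 0 : ℤ)))] at h
    linarith
  · -- D2
    intro p hp heq
    have h := b.D2 (p + 1) (by omega) heq
    rw [heq]
    linarith
  · -- D3
    intro p hp
    have h := b.D3 p hp
    obtain ⟨P, hP⟩ : ∃ P, b.P1 = P + 1 := ⟨b.P1 - 1, by omega⟩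
    rw [hP, Finset.sum_range_succ'] at h
    have hmin : (min (2 * b.n1 0) (b.n2 p) : ℤ) = (min (b.n2 p) (2 * s) : ℤ) := by
      rw [hcharge, min_comm]
    rw [hmin] at h
    have hPP : b.P1 - 1 = P := by omega
    rw [hPP]
    linarith
  · -- D4
    intro p hp heq
    have h := b.D4 p hp heq
    rw [heq]
    linarith
  · intro p hp
    have hp' : p < b.P1 - 1 := hp
    exact hadm.1 (p + 1) (by omega)
  · intro p hp
    have hp' : p < b.P2 := hp
    exact hadm.2 p hp'
end
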